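/- arXiv:0804.2115 — 2 statements merged into one kernel-verified Lean document; each statement's English description precedes it below -/
import Mathlib

section
/- (Eisenbud–Peeva–Sturmfels) If S is a minimal Gröbner basis in the polynomial ring k[X] (with respect to a monomial order on [X]), then S' = {δ(u·s) : s ∈ S, u ∈ U(s̄)} ∪ {xᵢxⱼ - xⱼxᵢ : i > j} is a Gröbner–Shirshov basis in the free algebra k⟨X⟩ with respect to the lifted order on X*. -/
/-- A monomial order: a well-founded strict total order compatible with multiplication. -/
def MonOrd {M : Type*} [Monoid M] (lt : M → M → Prop) : Prop :=
  IsStrictTotalOrder M lt ∧ WellFounded lt ∧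
    ∀ u v w₁ w₂ : M, lt u v → lt (w₁ * u * w₂) (w₁ * v * w₂)

/-- `m` is the leading word of `f` with respect to the order `lt`. -/
def IsLeadR {k M : Type*} [Semiring k] (lt : M → M → Prop)
    (f : MonoidAlgebra k M) (m : M) : Prop :=
  m ∈ f.coeff.support ∧ ∀ u ∈ f.coeff.support, u ≠ m → lt u m

/-- `f` is monic: its leading coefficient is `1`. -/
def MonicR {k M : Type*} [Semiring k] (lt : M → M → Prop) (f : MonoidAlgebra k M) : Prop :=
  ∃ m, IsLeadR lt f m ∧ f.coeff m = 1

/-- The monomial `m` viewed as an element of the monoid algebra. -/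
noncomputable def mono (k : Type*) {M : Type*} [Semiring k] [Monoid M] (m : M) :
    MonoidAlgebra k M := MonoidAlgebra.of k M m

/-- `h` is trivial modulo `(S, w)`: it is a linear combination `Σ αᵢ aᵢ sᵢ bᵢ`
with `sᵢ ∈ S` and leading words `aᵢ s̄ᵢ bᵢ < w`. -/
def TrivModR {k M : Type*} [Semiring k] [Monoid M] (lt : M → M → Prop)
    (S : Set (MonoidAlgebra k M)) (w : M) (h : MonoidAlgebra k M) : Prop :=
  ∃ (n : ℕ) (α : Fin n → k) (a b : Fin n → M) (s : Fin n → MonoidAlgebra k M),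
    (∀ i, s i ∈ S) ∧
    h = ∑ i, α i • (mono k (a i) * s i * mono k (b i)) ∧
    ∀ i, ∃ m, IsLeadR lt (s i) m ∧ lt (a i * m * b i) w

/-- Gröbner–Shirshov basis in a free associative algebra `k⟨Z⟩`:
all intersection and inclusion compositions are trivial. -/
def FIsGSB {k Z : Type*} [Ring k] (lt : FreeMonoid Z → FreeMonoid Z → Prop)
    (S : Set (MonoidAlgebra k (FreeMonoid Z))) : Prop :=
  (∀ s ∈ S, MonicR lt s) ∧
  ∀ f ∈ S, ∀ g ∈ S, ∀ mf mg : FreeMonoid Z, IsLeadR lt f mf → IsLeadR lt g mg →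
    ((∀ a b : FreeMonoid Z, mf * b = a * mg →
        (mf * b).length < mf.length + mg.length →
        TrivModR lt S (mf * b) (f * mono k b - mono k a * g)) ∧
     (∀ a b : FreeMonoid Z, mf = a * mg * b →
        TrivModR lt S mf (f - mono k a * g * mono k b)))

/-- the deg-lex order on words induced by an order on letters -/
def degLex {A : Type*} (ltA : A → A → Prop) (u v : FreeMonoid A) : Prop :=
  u.length < v.length ∨ (u.length = v.length ∧ List.Lex ltA u.toList v.toList)

/-- Normal words of `k⟨X⟩ ⊗ k⟨Y⟩`: the monoid `X* × Y*`
(whose multiplication is `(u^X u^Y)(v^X v^Y) = u^X v^X u^Y v^Y`). -/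
abbrev NW (X Y : Type*) := FreeMonoid X × FreeMonoid Y

/-- the (deg-)lex order on `N = X*Y*` built from orders on `X*` and `Y*`:
`u > v` iff `u^X > v^X` or (`u^X = v^X` and `u^Y > v^Y`). -/
def lexNW {X Y : Type*} (ltX : FreeMonoid X → FreeMonoid X → Prop)
    (ltY : FreeMonoid Y → FreeMonoid Y → Prop) (u v : NW X Y) : Prop :=
  ltX u.1 v.1 ∨ (u.1 = v.1 ∧ ltY u.2 v.2)

/-- All compositions `(f,g)_w = p` in `k⟨X⟩ ⊗ k⟨Y⟩`, where `mf, mg` are the leading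
words of `f, g`.  The cases are: 1.1 `X`-inclusion only, 1.2 `Y`-inclusion only,
1.3 `X,Y`-inclusion, 1.4 `X,Y`-skew-inclusion, 2.1 `X`-intersection only,
2.2 `Y`-intersection only, 2.3 `X,Y`-intersection, 2.4 `X,Y`-skew-intersection,
3.1 `X`-inclusion and `Y`-intersection, 3.2 `X`-intersection and `Y`-inclusion. -/
def IsComp {k X Y : Type*} [Ring k] (f g : MonoidAlgebra k (NW X Y))
    (mf mg : NW X Y) (p : MonoidAlgebra k (NW X Y)) (w : NW X Y) : Prop :=
  let e : NW X Y → MonoidAlgebra k (NW X Y) := fun m => mono k m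
  let fx := mf.1; let fy := mf.2; let gx := mg.1; let gy := mg.2
  -- 1.1 X-inclusion only
  (∃ (a b : FreeMonoid X) (c : FreeMonoid Y), fx = a * gx * b ∧
     ((w = (fx, fy * c * gy) ∧ p = f * e (1, c * gy) - e (a, fy * c) * g * e (b, 1)) ∨
      (w = (fx, gy * c * fy) ∧ p = e (1, gy * c) * f - e (a, 1) * g * e (b, c * fy)))) ∨
  -- 1.2 Y-inclusion only
  (∃ (a : FreeMonoid X) (c d : FreeMonoid Y), fy = c * gy * d ∧
     ((w = (fx * a * gx, fy) ∧ p = f * e (a * gx, 1) - e (fx * a, c) * g * e (1, d)) ∨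
      (w = (gx * a * fx, fy) ∧ p = e (gx * a, 1) * f - e (1, c) * g * e (a * fx, d)))) ∨
  -- 1.3 X,Y-inclusion
  (∃ (a b : FreeMonoid X) (c d : FreeMonoid Y), fx = a * gx * b ∧ fy = c * gy * d ∧
     w = (fx, fy) ∧ p = f - e (a, c) * g * e (b, d)) ∨
  -- 1.4 X,Y-skew-inclusion
  (∃ (a b : FreeMonoid X) (c d : FreeMonoid Y), fx = a * gx * b ∧ gy = c * fy * d ∧
     w = (fx, gy) ∧ p = e (1, c) * f * e (1, d) - e (a, 1) * g * e (b, 1)) ∨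
  -- 2.1 X-intersection only
  (∃ (a b : FreeMonoid X) (c : FreeMonoid Y), fx * a = b * gx ∧
     (fx * a).length < fx.length + gx.length ∧
     ((w = (fx * a, fy * c * gy) ∧ p = f * e (a, c * gy) - e (b, fy * c) * g) ∨
      (w = (fx * a, gy * c * fy) ∧
        p = e (1, gy * c) * f * e (a, 1) - e (b, 1) * g * e (1, c * fy)))) ∨
  -- 2.2 Y-intersection only
  (∃ (a : FreeMonoid X) (c d : FreeMonoid Y), fy * c = d * gy ∧
     (fy * c).length < fy.length + gy.length ∧
     ((w = (fx * a * gx, fy * c) ∧ p = f * e (a * gx, c) - e (fx * a, d) * g) ∨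
      (w = (gx * a * fx, fy * c) ∧
        p = e (gx * a, 1) * f * e (1, c) - e (1, d) * g * e (a * fx, 1)))) ∨
  -- 2.3 X,Y-intersection
  (∃ (a b : FreeMonoid X) (c d : FreeMonoid Y), fx * a = b * gx ∧ fy * c = d * gy ∧
     (fx * a).length < fx.length + gx.length ∧ (fy * c).length < fy.length + gy.length ∧
     w = (fx * a, fy * c) ∧ p = f * e (a, c) - e (b, d) * g) ∨
  -- 2.4 X,Y-skew-intersection
  (∃ (a b : FreeMonoid X) (c d : FreeMonoid Y), fx * a = b * gx ∧ c * fy = gy * d ∧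
     (fx * a).length < fx.length + gx.length ∧ (c * fy).length < fy.length + gy.length ∧
     w = (fx * a, c * fy) ∧ p = e (1, c) * f * e (a, 1) - e (b, 1) * g * e (1, d)) ∨
  -- 3.1 X-inclusion and Y-intersection
  (∃ (a b : FreeMonoid X) (c d : FreeMonoid Y), fx = a * gx * b ∧
     ((fy * c = d * gy ∧ (fy * c).length < fy.length + gy.length ∧
        w = (fx, fy * c) ∧ p = f * e (1, c) - e (a, d) * g * e (b, 1)) ∨
      (c * fy = gy * d ∧ (c * fy).length < fy.length + gy.length ∧
        w = (fx, c * fy) ∧ p = e (1, c) * f - e (a, 1) * g * e (b, d)))) ∨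
  -- 3.2 X-intersection and Y-inclusion
  (∃ (a b : FreeMonoid X) (c d : FreeMonoid Y), fx * a = b * gx ∧
     (fx * a).length < fx.length + gx.length ∧
     ((fy = c * gy * d ∧ w = (fx * a, fy) ∧ p = f * e (a, 1) - e (b, c) * g * e (1, d)) ∨
      (gy = c * fy * d ∧ w = (fx * a, gy) ∧ p = e (1, c) * f * e (a, d) - e (b, 1) * g)))

/-- Gröbner–Shirshov basis in `k⟨X⟩ ⊗ k⟨Y⟩`: a set of monic polynomials
all of whose compositions are trivial. -/
def IsGSB {k X Y : Type*} [Ring k] (lt : NW X Y → NW X Y → Prop)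
    (S : Set (MonoidAlgebra k (NW X Y))) : Prop :=
  (∀ s ∈ S, MonicR lt s) ∧
  ∀ f ∈ S, ∀ g ∈ S, ∀ (mf mg : NW X Y) (p : MonoidAlgebra k (NW X Y)) (w : NW X Y),
    IsLeadR lt f mf → IsLeadR lt g mg → IsComp f g mf mg p w → TrivModR lt S w p

/-- the abelianization map `γ : X* → [X]`, with `[X]` the free commutative monoid
on `X` realized as `Multiplicative (Multiset X)`. -/
def gam {X : Type*} (u : FreeMonoid X) : Multiplicative (Multiset X) :=
  Multiplicative.ofAdd (↑u.toList : Multiset X)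

/-- the order on `X*` lifted from a monomial order on `[X]`:
`u > v` iff `γ(u) > γ(v)`, or `γ(u) = γ(v)` and `u >_lex v`. -/
def liftOrd {X : Type*} [LinearOrder X]
    (ltC : Multiplicative (Multiset X) → Multiplicative (Multiset X) → Prop)
    (u v : FreeMonoid X) : Prop :=
  ltC (gam u) (gam v) ∨ (gam u = gam v ∧ List.Lex (· < ·) u.toList v.toList)

/-- `δ` on monomials: the weakly increasing word representing a commutative monomial. -/
noncomputable def dword {X : Type*} [LinearOrder X] (m : Multiplicative (Multiset X)) :
    FreeMonoid X :=
  FreeMonoid.ofList (Multiset.sort (Multiplicative.toAdd m) (· ≤ ·))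

/-- the lexicographic splitting `δ : k[X] → k⟨X⟩`. -/
noncomputable def deltaMap {k X : Type*} [Semiring k] [LinearOrder X]
    (f : MonoidAlgebra k (Multiplicative (Multiset X))) :
    MonoidAlgebra k (FreeMonoid X) :=
  MonoidAlgebra.ofCoeff (Finsupp.mapDomain dword f.coeff)

/-- the set `S₁ = {xᵢxⱼ - xⱼxᵢ : xᵢ > xⱼ}` of commutators in `k⟨X⟩`. -/
noncomputable def commSet (k X : Type*) [Ring k] [LinearOrder X] :
    Set (MonoidAlgebra k (FreeMonoid X)) :=
  {p | ∃ i j : X, j < i ∧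
    p = mono k (FreeMonoid.of i * FreeMonoid.of j) - mono k (FreeMonoid.of j * FreeMonoid.of i)}

/-- `U(m)`: commutative monomials in the variables strictly between the least and the
greatest variable occurring in `m`. -/
def UU {X : Type*} [LinearOrder X] (m : Multiplicative (Multiset X)) :
    Set (Multiplicative (Multiset X)) :=
  {u | ∀ y ∈ Multiplicative.toAdd u,
     (∃ z ∈ Multiplicative.toAdd m, z < y) ∧ (∃ z ∈ Multiplicative.toAdd m, y < z)}

/-- Normal words of `k[X] ⊗ k⟨Y⟩`: the monoid `[X]Y*`. -/
abbrev CW (X Y : Type*) := Multiplicative (Multiset X) × FreeMonoid Y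

/-- the order on `[X]Y*`: compare the `Y`-part first, then the `[X]`-part. -/
def cwOrd {X Y : Type*}
    (ltC : Multiplicative (Multiset X) → Multiplicative (Multiset X) → Prop)
    (ltY : FreeMonoid Y → FreeMonoid Y → Prop) (u v : CW X Y) : Prop :=
  ltY u.2 v.2 ∨ (u.2 = v.2 ∧ ltC u.1 v.1)

/-- the order on `X*Y*` lifted from the order on `[X]Y*`, breaking ties by `lex`
on the `X`-component. -/
def liftNW {X Y : Type*} [LinearOrder X]
    (ltC : Multiplicative (Multiset X) → Multiplicative (Multiset X) → Prop)
    (ltY : FreeMonoid Y → FreeMonoid Y → Prop) (u v : NW X Y) : Prop :=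
  cwOrd ltC ltY (gam u.1, u.2) (gam v.1, v.2) ∨
    ((gam u.1 = gam v.1 ∧ u.2 = v.2) ∧ List.Lex (· < ·) u.1.toList v.1.toList)

/-- `δ : k[X] ⊗ k⟨Y⟩ → k⟨X⟩ ⊗ k⟨Y⟩`, the lexicographic splitting extended by the
identity on `Y`-words. -/
noncomputable def deltaNW {k X Y : Type*} [Semiring k] [LinearOrder X]
    (f : MonoidAlgebra k (CW X Y)) : MonoidAlgebra k (NW X Y) :=
  MonoidAlgebra.ofCoeff (Finsupp.mapDomain (fun m : CW X Y => ((dword m.1, m.2) : NW X Y)) f.coeff)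

/-- Mikhalev–Zolotykh compositions in `k[X] ⊗ k⟨Y⟩`: inclusion `C₁`, overlap `C₂`
and external `C₃` compositions, where `mf`, `mg` are the leading words of `f`, `g`,
and `L = lcm(mf^X, mg^X)`. -/
def MZComp {k X Y : Type*} [Ring k] [DecidableEq X]
    (ltC : Multiplicative (Multiset X) → Multiplicative (Multiset X) → Prop)
    (f g : MonoidAlgebra k (CW X Y)) (mf mg : CW X Y)
    (p : MonoidAlgebra k (CW X Y)) (w : CW X Y) : Prop :=
  let e : CW X Y → MonoidAlgebra k (CW X Y) := fun m => mono k m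
  let fX := Multiplicative.toAdd mf.1; let gX := Multiplicative.toAdd mg.1
  let L : Multiset X := fX ∪ gX
  let Lf : Multiplicative (Multiset X) := Multiplicative.ofAdd (L - fX)
  let Lg : Multiplicative (Multiset X) := Multiplicative.ofAdd (L - gX)
  -- C₁ : inclusion
  (∃ c d : FreeMonoid Y, mf.2 = c * mg.2 * d ∧
     (mf.2 = mg.2 → (mg.1 = mf.1 ∨ ltC mg.1 mf.1)) ∧ (mg.2 = 1 → c = 1) ∧
     w = (Multiplicative.ofAdd L, mf.2) ∧
     p = e (Lf, 1) * f - e (Lg, c) * g * e (1, d)) ∨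
  -- C₂ : overlap
  (∃ c d c₀ : FreeMonoid Y, c₀ ≠ 1 ∧ mf.2 = c * c₀ ∧ mg.2 = c₀ * d ∧
     w = (Multiplicative.ofAdd L, mf.2 * d) ∧
     p = e (Lf, 1) * f * e (1, d) - e (Lg, c) * g) ∨
  -- C₃ : external
  (∃ c₀ : FreeMonoid Y, fX ∩ gX ≠ 0 ∧ mf.2 ≠ 1 ∧ mg.2 ≠ 1 ∧
     w = (Multiplicative.ofAdd L, mf.2 * c₀ * mg.2) ∧
     p = e (Lf, 1) * f * e (1, c₀ * mg.2) - e (Lg, mf.2 * c₀) * g)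

/-- Gröbner–Shirshov basis in `k[X] ⊗ k⟨Y⟩` in the sense of Mikhalev–Zolotykh. -/
def MZGSB {k X Y : Type*} [Ring k] [DecidableEq X]
    (ltC : Multiplicative (Multiset X) → Multiplicative (Multiset X) → Prop)
    (ltY : FreeMonoid Y → FreeMonoid Y → Prop)
    (S : Set (MonoidAlgebra k (CW X Y))) : Prop :=
  (∀ s ∈ S, MonicR (cwOrd ltC ltY) s) ∧
  ∀ f ∈ S, ∀ g ∈ S, ∀ (mf mg : CW X Y) (p : MonoidAlgebra k (CW X Y)) (w : CW X Y),
    IsLeadR (cwOrd ltC ltY) f mf → IsLeadR (cwOrd ltC ltY) g mg →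
    MZComp ltC f g mf mg p w → TrivModR (cwOrd ltC ltY) S w p

set_option linter.unusedSectionVars false
set_option maxHeartbeats 1000000

open Finsupp MonoidAlgebra List

lemma mdom_comp {k : Type*} [Semiring k] {A B C : Type*} {f : A → B} {g : B → C}
    {x : MonoidAlgebra k A} :
    MonoidAlgebra.mapDomain (g ∘ f) x = MonoidAlgebra.mapDomain g (MonoidAlgebra.mapDomain f x) := by
  show MonoidAlgebra.ofCoeff _ = MonoidAlgebra.ofCoeff _
  rw [Finsupp.mapDomain_comp]
  rfl

lemma mdom_apply {k : Type*} [Semiring k] {A B : Type*} {D : A → B} (hD : Function.Injective D)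
    (x : MonoidAlgebra k A) (a : A) : (MonoidAlgebra.mapDomain D x).coeff (D a) = x.coeff a :=
  Finsupp.mapDomain_apply hD x.coeff a

lemma mdom_support {k : Type*} [Semiring k] {A B : Type*} [DecidableEq B] {D : A → B}
    {x : MonoidAlgebra k A} :
    (MonoidAlgebra.mapDomain D x).coeff.support ⊆ x.coeff.support.image D :=
  Finsupp.mapDomain_support

lemma mdom_id {k : Type*} [Semiring k] {A : Type*} {x : MonoidAlgebra k A} :
    MonoidAlgebra.mapDomain id x = x := by
  show MonoidAlgebra.ofCoeff _ = _
  rw [Finsupp.mapDomain_id]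

section Aux0
variable {X : Type*} [LinearOrder X]

lemma gam_mul (u v : FreeMonoid X) : gam (u * v) = gam u * gam v := by
  unfold gam
  rw [FreeMonoid.toList_mul]
  simp [← Multiset.coe_add]

lemma gam_one : gam (1 : FreeMonoid X) = 1 := rfl

lemma gam_dword (m : Multiplicative (Multiset X)) : gam (dword m) = m := by
  unfold gam dword
  simp [FreeMonoid.toList_ofList, Multiset.sort_eq]

lemma dword_sorted (m : Multiplicative (Multiset X)) :
    ((dword m).toList).Pairwise (· ≤ ·) := by
  unfold dword
  simp [FreeMonoid.toList_ofList, Multiset.pairwise_sort]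

lemma gam_eq_iff {u v : FreeMonoid X} : gam u = gam v ↔ u.toList.Perm v.toList := by
  unfold gam
  constructor
  · intro h
    have := congrArg Multiplicative.toAdd h
    simpa [Multiset.coe_eq_coe] using this
  · intro h
    simp [Multiset.coe_eq_coe.2 h]

lemma toList_injective : Function.Injective (FreeMonoid.toList (α := X)) := fun _ _ h => h

lemma dword_gam_of_sorted {v : FreeMonoid X} (h : v.toList.Pairwise (· ≤ ·)) :
    dword (gam v) = v := by
  apply toList_injective
  unfold dword gam
  rw [FreeMonoid.toList_ofList]
  exact List.Perm.eq_of_pairwise' (Multiset.pairwise_sort _ _) h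
    (Multiset.coe_eq_coe.1 (Multiset.sort_eq _ _))

lemma dword_injective : Function.Injective (dword (X := X)) :=
  Function.LeftInverse.injective gam_dword

lemma gam_length_eq {u v : FreeMonoid X} (h : gam u = gam v) :
    u.toList.length = v.toList.length :=
  (gam_eq_iff.1 h).length_eq

lemma lex_irrefl' (l : List X) : ¬ List.Lex (· < ·) l l :=
  _root_.irrefl l

lemma lex_trans' {a b c : List X} (h1 : List.Lex (· < ·) a b) (h2 : List.Lex (· < ·) b c) :
    List.Lex (· < ·) a c := @lt_trans (List X) _ a b c h1 h2

lemma lex_append_right' {l₁ l₂ : List X} (h : List.Lex (· < ·) l₁ l₂)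
    (hlen : l₁.length = l₂.length) (t : List X) : List.Lex (· < ·) (l₁ ++ t) (l₂ ++ t) := by
  induction h with
  | nil => simp at hlen
  | @cons a l₁ l₂ h ih => exact List.Lex.cons (ih (by simpa using hlen))
  | rel h => exact List.Lex.rel h

lemma sorted_lex_min : ∀ {l' l : List X}, l'.Pairwise (· ≤ ·) → l'.Perm l →
    l' = l ∨ List.Lex (· < ·) l' l := by
  intro l'
  induction l' with
  | nil => intro l _ hp; left; exact (hp.nil_eq).symm ▸ rfl
  | cons a t' ih =>
    intro l hs hp
    cases l with
    | nil => exact absurd hp.symm.nil_eq (by simp)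
    | cons b t =>
      have hb : b ∈ a :: t' := hp.symm.subset (by simp)
      have hab : a ≤ b := by
        rcases List.mem_cons.1 hb with h | h
        · exact le_of_eq h.symm
        · exact (List.pairwise_cons.1 hs).1 b h
      rcases lt_or_eq_of_le hab with h | h
      · exact Or.inr (List.Lex.rel h)
      · subst h
        have hp' : t'.Perm t := hp.cons_inv
        rcases ih (List.pairwise_cons.1 hs).2 hp' with h | h
        · left; rw [h]
        · exact Or.inr (List.Lex.cons h)

end Aux0

section Aux1
variable {k : Type*} [Field k] {M : Type*} [Monoid M]

lemma mono_def (m : M) : mono k m = MonoidAlgebra.single m 1 := by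
  simp [mono, MonoidAlgebra.of_apply]

lemma mono_mul (a b : M) : mono k a * mono k b = mono k (a * b) := by
  simp [mono_def, MonoidAlgebra.single_mul_single]

lemma mono_one : mono k (1 : M) = 1 := by
  rw [mono_def, MonoidAlgebra.one_def]

lemma mul_mono_left (a : M) (f : MonoidAlgebra k M) :
    mono k a * f = MonoidAlgebra.mapDomain (a * ·) f := by
  induction f using MonoidAlgebra.induction_linear with
  | zero => simp
  | add f g hf hg => rw [mul_add, MonoidAlgebra.mapDomain_add, hf, hg]
  | single m c =>
      rw [mono_def]
      show MonoidAlgebra.single a 1 * MonoidAlgebra.single m c = _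
      rw [MonoidAlgebra.single_mul_single, MonoidAlgebra.mapDomain_single, one_mul]

lemma mul_mono_right (f : MonoidAlgebra k M) (b : M) :
    f * mono k b = MonoidAlgebra.mapDomain (· * b) f := by
  induction f using MonoidAlgebra.induction_linear with
  | zero => simp
  | add f g hf hg => rw [add_mul, MonoidAlgebra.mapDomain_add, hf, hg]
  | single m c =>
      rw [mono_def]
      show MonoidAlgebra.single m c * MonoidAlgebra.single b 1 = _
      rw [MonoidAlgebra.single_mul_single, MonoidAlgebra.mapDomain_single, mul_one]

lemma sandwich (a b : M) (f : MonoidAlgebra k M) :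
    mono k a * f * mono k b = MonoidAlgebra.mapDomain (fun v => a * v * b) f := by
  rw [mul_mono_left, mul_mono_right, ← mdom_comp]
  rfl

lemma isLead_mapDomain {β γ : Type*} (lt' : γ → γ → Prop) {D : β → γ}
    (hD : Function.Injective D) (f : MonoidAlgebra k β) (mf : β) (h1 : mf ∈ f.coeff.support)
    (h2 : ∀ u ∈ f.coeff.support, u ≠ mf → lt' (D u) (D mf)) :
    IsLeadR lt' (MonoidAlgebra.mapDomain D f : MonoidAlgebra k γ) (D mf) ∧
      (MonoidAlgebra.mapDomain D f : MonoidAlgebra k γ).coeff (D mf) = f.coeff mf := by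
  classical
  have hsupp := Finsupp.mapDomain_support_of_injective hD f.coeff
  refine ⟨⟨?_, ?_⟩, mdom_apply hD f mf⟩
  · show D mf ∈ (Finsupp.mapDomain D f.coeff).support
    rw [hsupp]; exact Finset.mem_image_of_mem D h1
  · intro u hu hne
    have : u ∈ (Finsupp.mapDomain D f.coeff).support := hu
    rw [hsupp] at this
    obtain ⟨v, hv, rfl⟩ := Finset.mem_image.1 this
    exact h2 v hv (fun h => hne (by rw [h]))

lemma lead_unique {M' : Type*} {lt : M' → M' → Prop}
    (hirr : ∀ m, ¬ lt m m) (htr : ∀ {a b c}, lt a b → lt b c → lt a c)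
    {f : MonoidAlgebra k M'} {m m' : M'} (hm : IsLeadR lt f m) (hm' : IsLeadR lt f m') :
    m = m' := by
  by_contra hne
  exact hirr m (htr (hm'.2 m hm.1 hne) (hm.2 m' hm'.1 (Ne.symm hne)))

end Aux1
section Aux2
variable {X : Type*} [LinearOrder X]
variable {ltC : Multiplicative (Multiset X) → Multiplicative (Multiset X) → Prop}

lemma ltC_trans (hC : MonOrd ltC) {a b c} (h1 : ltC a b) (h2 : ltC b c) : ltC a c :=
  hC.1.toIsStrictOrder.toIsTrans.trans a b c h1 h2

lemma ltC_irrefl (hC : MonOrd ltC) (a) : ¬ ltC a a := by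
  haveI := hC.1; exact _root_.irrefl a

lemma ltC_tri (hC : MonOrd ltC) (a b) : ltC a b ∨ a = b ∨ ltC b a :=
  by haveI := hC.1; exact trichotomous a b

lemma ltC_mul (hC : MonOrd ltC) {a b : Multiplicative (Multiset X)}
    (c : Multiplicative (Multiset X)) (h : ltC a b) : ltC (c * a) (c * b) := by
  have := hC.2.2 a b c 1 h
  simpa using this

lemma lift_trans (hC : MonOrd ltC) {u v w : FreeMonoid X}
    (h1 : liftOrd ltC u v) (h2 : liftOrd ltC v w) : liftOrd ltC u w := by
  rcases h1 with h1 | ⟨e1, l1⟩ <;> rcases h2 with h2 | ⟨e2, l2⟩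
  · exact Or.inl (ltC_trans hC h1 h2)
  · exact Or.inl (e2 ▸ h1)
  · exact Or.inl (e1 ▸ h2)
  · exact Or.inr ⟨e1.trans e2, lex_trans' l1 l2⟩

lemma lift_irrefl (hC : MonOrd ltC) (u : FreeMonoid X) : ¬ liftOrd ltC u u := by
  rintro (h | ⟨-, h⟩)
  · exact ltC_irrefl hC _ h
  · exact lex_irrefl' _ h

lemma lift_asymm (hC : MonOrd ltC) {u v : FreeMonoid X}
    (h1 : liftOrd ltC u v) (h2 : liftOrd ltC v u) : False :=
  lift_irrefl hC u (lift_trans hC h1 h2)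

lemma lift_compat (hC : MonOrd ltC) {u v : FreeMonoid X} (a b : FreeMonoid X)
    (h : liftOrd ltC u v) : liftOrd ltC (a * u * b) (a * v * b) := by
  rcases h with h | ⟨e, l⟩
  · left
    rw [gam_mul, gam_mul, gam_mul, gam_mul]
    exact hC.2.2 _ _ _ _ h
  · right
    constructor
    · rw [gam_mul, gam_mul, gam_mul, gam_mul, e]
    · have hlen := gam_length_eq e
      have h1 : List.Lex (· < ·) (u.toList ++ b.toList) (v.toList ++ b.toList) :=
        lex_append_right' l hlen b.toList
      have h2 := List.Lex.append_left (· < ·) h1 a.toList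
      have e1 : (a * u * b).toList = a.toList ++ (u.toList ++ b.toList) := by
        simp [FreeMonoid.toList_mul]
      have e2 : (a * v * b).toList = a.toList ++ (v.toList ++ b.toList) := by
        simp [FreeMonoid.toList_mul]
      rw [e1, e2]
      exact h2

lemma dword_le (ltC : Multiplicative (Multiset X) → Multiplicative (Multiset X) → Prop)
    (v : FreeMonoid X) :
    dword (gam v) = v ∨ liftOrd ltC (dword (gam v)) v := by
  have hperm : ((dword (gam v)).toList).Perm v.toList :=
    gam_eq_iff.1 (gam_dword (gam v))
  rcases sorted_lex_min (dword_sorted (gam v)) hperm with h | h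
  · exact Or.inl (toList_injective h)
  · exact Or.inr (Or.inr ⟨gam_dword (gam v), h⟩)

/-- key bound transfer: if `gam v = m' <C m` and `dword m < w` then `v < w`. -/
lemma HB (hC : MonOrd ltC) {m' m : Multiplicative (Multiset X)} {w : FreeMonoid X}
    (h1 : ltC m' m) (h2 : liftOrd ltC (dword m) w) {v : FreeMonoid X} (hv : gam v = m') :
    liftOrd ltC v w := by
  rcases h2 with h2 | ⟨e, -⟩
  · rw [gam_dword] at h2
    exact Or.inl (hv ▸ ltC_trans hC h1 h2)
  · rw [gam_dword] at e
    exact Or.inl (hv ▸ (e ▸ h1))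

end Aux2
section Aux3
variable {k X : Type*} [Field k] [LinearOrder X]
variable {ltC : Multiplicative (Multiset X) → Multiplicative (Multiset X) → Prop}

/-- the set of bounded multiples `a·s·b` with `a s̄ b < w` -/
def atomSet (lt : FreeMonoid X → FreeMonoid X → Prop)
    (S' : Set (MonoidAlgebra k (FreeMonoid X))) (w : FreeMonoid X) :
    Set (MonoidAlgebra k (FreeMonoid X)) :=
  {q | ∃ a b s m, s ∈ S' ∧ IsLeadR lt s m ∧ lt (a * m * b) w ∧
    q = mono k a * s * mono k b}

noncomputable def trivSpan (lt : FreeMonoid X → FreeMonoid X → Prop)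
    (S' : Set (MonoidAlgebra k (FreeMonoid X))) (w : FreeMonoid X) :
    Submodule k (MonoidAlgebra k (FreeMonoid X)) :=
  Submodule.span k (atomSet lt S' w)

lemma trivSpan_to_trivMod {lt : FreeMonoid X → FreeMonoid X → Prop}
    {S' : Set (MonoidAlgebra k (FreeMonoid X))} {w : FreeMonoid X}
    {h : MonoidAlgebra k (FreeMonoid X)} (hh : h ∈ trivSpan lt S' w) :
    TrivModR lt S' w h := by
  classical
  rw [trivSpan, Submodule.mem_span_set] at hh
  obtain ⟨c, hsupp, hsum⟩ := hh
  set n := c.support.card with hn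
  set e := c.support.equivFin with he
  set q : Fin n → MonoidAlgebra k (FreeMonoid X) := fun i => (e.symm i : _) with hq
  have hat : ∀ i, q i ∈ atomSet lt S' w := fun i => hsupp (e.symm i).2
  choose a b s m hS hlead hlt hrep using hat
  refine ⟨n, fun i => c (q i), a, b, s, hS, ?_, fun i => ⟨m i, hlead i, hlt i⟩⟩
  have : h = ∑ i : Fin n, c (q i) • q i := by
    rw [← hsum]
    rw [Finsupp.sum]
    rw [← Finset.sum_coe_sort]
    rw [← Equiv.sum_comp e.symm (fun x : c.support => c (x : _) • (x : MonoidAlgebra k (FreeMonoid X)))]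
  rw [this]
  exact Finset.sum_congr rfl (fun i _ => by rw [← hrep i])

lemma atom_mem {lt : FreeMonoid X → FreeMonoid X → Prop}
    {S' : Set (MonoidAlgebra k (FreeMonoid X))} {w : FreeMonoid X}
    {a b : FreeMonoid X} {s : MonoidAlgebra k (FreeMonoid X)} {m : FreeMonoid X}
    (hs : s ∈ S') (hm : IsLeadR lt s m) (hlt : lt (a * m * b) w) :
    mono k a * s * mono k b ∈ trivSpan lt S' w :=
  Submodule.subset_span ⟨a, b, s, m, hs, hm, hlt, rfl⟩

/-- atoms bounded by `≤ v` -/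
def atomSetLE (lt : FreeMonoid X → FreeMonoid X → Prop)
    (S' : Set (MonoidAlgebra k (FreeMonoid X))) (v : FreeMonoid X) :
    Set (MonoidAlgebra k (FreeMonoid X)) :=
  {q | ∃ a b s m, s ∈ S' ∧ IsLeadR lt s m ∧ (a * m * b = v ∨ lt (a * m * b) v) ∧
    q = mono k a * s * mono k b}

noncomputable def spanLE (lt : FreeMonoid X → FreeMonoid X → Prop)
    (S' : Set (MonoidAlgebra k (FreeMonoid X))) (v : FreeMonoid X) :
    Submodule k (MonoidAlgebra k (FreeMonoid X)) :=
  Submodule.span k (atomSetLE lt S' v)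

lemma atomLE_mem {lt : FreeMonoid X → FreeMonoid X → Prop}
    {S' : Set (MonoidAlgebra k (FreeMonoid X))} {v : FreeMonoid X}
    {a b : FreeMonoid X} {s : MonoidAlgebra k (FreeMonoid X)} {m : FreeMonoid X}
    (hs : s ∈ S') (hm : IsLeadR lt s m) (hlt : a * m * b = v ∨ lt (a * m * b) v) :
    mono k a * s * mono k b ∈ spanLE lt S' v :=
  Submodule.subset_span ⟨a, b, s, m, hs, hm, hlt, rfl⟩

lemma spanLE_le_trivSpan (hC : MonOrd ltC) {S' : Set (MonoidAlgebra k (FreeMonoid X))}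
    {v w : FreeMonoid X} (hvw : liftOrd ltC v w) :
    spanLE (liftOrd ltC) S' v ≤ trivSpan (liftOrd ltC) S' w := by
  apply Submodule.span_le.2
  rintro q ⟨a, b, s, m, hs, hm, hlt, rfl⟩
  refine Submodule.subset_span ⟨a, b, s, m, hs, hm, ?_, rfl⟩
  rcases hlt with h | h
  · exact h ▸ hvw
  · exact lift_trans hC h hvw

lemma spanLE_mono (hC : MonOrd ltC) {S' : Set (MonoidAlgebra k (FreeMonoid X))}
    {v v' : FreeMonoid X} (hvv' : v = v' ∨ liftOrd ltC v v') :
    spanLE (liftOrd ltC) S' v ≤ spanLE (liftOrd ltC) S' v' := by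
  rcases hvv' with rfl | hvv'
  · exact le_rfl
  apply Submodule.span_le.2
  rintro q ⟨a, b, s, m, hs, hm, hlt, rfl⟩
  refine Submodule.subset_span ⟨a, b, s, m, hs, hm, Or.inr ?_, rfl⟩
  rcases hlt with h | h
  · exact h ▸ hvv'
  · exact lift_trans hC h hvv'

lemma spanLE_mul_left (hC : MonOrd ltC) {S' : Set (MonoidAlgebra k (FreeMonoid X))}
    {v : FreeMonoid X} (y : FreeMonoid X) {q : MonoidAlgebra k (FreeMonoid X)}
    (hq : q ∈ spanLE (liftOrd ltC) S' v) :
    mono k y * q ∈ spanLE (liftOrd ltC) S' (y * v) := by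
  induction hq using Submodule.span_induction with
  | mem q hq =>
      obtain ⟨a, b, s, m, hs, hm, hlt, rfl⟩ := hq
      rw [← mul_assoc, ← mul_assoc, mono_mul]
      apply atomLE_mem hs hm
      rcases hlt with h | h
      · left
        rw [show y * a * m * b = y * (a * m * b) by simp [mul_assoc], h]
      · right
        have := lift_compat hC y 1 h
        simpa only [one_mul, mul_one, mul_assoc] using this
  | zero => simpa using Submodule.zero_mem _
  | add x y' hx hy' ihx ihy' => rw [mul_add]; exact Submodule.add_mem _ ihx ihy'
  | smul c x hx ihx => rw [mul_smul_comm]; exact Submodule.smul_mem _ _ ihx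

end Aux3
section Aux4
variable {k X : Type*} [Field k] [LinearOrder X]
variable {ltC : Multiplicative (Multiset X) → Multiplicative (Multiset X) → Prop}

lemma toList_of_mul (i j : X) :
    (FreeMonoid.of i * FreeMonoid.of j).toList = [i, j] := rfl

lemma comm_lead (hC : MonOrd ltC) {i j : X} (hj : j < i) :
    IsLeadR (liftOrd ltC)
      ((mono k (FreeMonoid.of i * FreeMonoid.of j) - mono k (FreeMonoid.of j * FreeMonoid.of i)))
      (FreeMonoid.of i * FreeMonoid.of j) ∧
    ((mono k (FreeMonoid.of i * FreeMonoid.of j) - mono k (FreeMonoid.of j * FreeMonoid.of i))).coeff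
      (FreeMonoid.of i * FreeMonoid.of j) = 1 := by
  classical
  have hne : (FreeMonoid.of i * FreeMonoid.of j) ≠ (FreeMonoid.of j * FreeMonoid.of i) := by
    intro h
    have := congrArg FreeMonoid.toList h
    rw [toList_of_mul, toList_of_mul] at this
    exact absurd (List.cons.inj this).1 (ne_of_gt hj)
  have happ : ((mono k (FreeMonoid.of i * FreeMonoid.of j) -
      mono k (FreeMonoid.of j * FreeMonoid.of i))).coeff
      (FreeMonoid.of i * FreeMonoid.of j) = 1 := by
    rw [mono_def, mono_def]
    rw [MonoidAlgebra.coeff_sub, MonoidAlgebra.coeff_single, MonoidAlgebra.coeff_single, Finsupp.sub_apply, Finsupp.single_eq_same, Finsupp.single_eq_of_ne hne, sub_zero]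
  have hsupp : ((mono k (FreeMonoid.of i * FreeMonoid.of j) -
      mono k (FreeMonoid.of j * FreeMonoid.of i))).coeff.support ⊆
      {FreeMonoid.of i * FreeMonoid.of j, FreeMonoid.of j * FreeMonoid.of i} := by
    rw [mono_def, mono_def, MonoidAlgebra.coeff_sub, MonoidAlgebra.coeff_single, MonoidAlgebra.coeff_single]
    refine Finsupp.support_sub.trans ?_
    apply Finset.union_subset
    · exact (Finsupp.support_single_subset).trans (by simp)
    · exact (Finsupp.support_single_subset).trans (by simp)
  refine ⟨⟨?_, ?_⟩, happ⟩
  · rw [Finsupp.mem_support_iff, happ]; exact one_ne_zero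
  · intro u hu hne'
    rcases Finset.mem_insert.1 (hsupp hu) with rfl | h
    · exact absurd rfl hne'
    · have : u = FreeMonoid.of j * FreeMonoid.of i := by simpa using h
      subst this
      right
      constructor
      · apply gam_eq_iff.2
        rw [toList_of_mul, toList_of_mul]
        exact List.Perm.swap i j []
      · rw [toList_of_mul, toList_of_mul]
        exact List.Lex.rel hj

lemma delta_as_mapDomain (u : Multiplicative (Multiset X)) (s : MonoidAlgebra k (Multiplicative (Multiset X))) :
    deltaMap (mono k u * s) = MonoidAlgebra.mapDomain (fun m => dword (u * m)) s := by
  show MonoidAlgebra.mapDomain dword _ = _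
  rw [mul_mono_left, ← mdom_comp]
  rfl

lemma delt_lead (hC : MonOrd ltC) {s : MonoidAlgebra k (Multiplicative (Multiset X))}
    {ms : Multiplicative (Multiset X)} (hms : IsLeadR ltC s ms)
    (u : Multiplicative (Multiset X)) :
    IsLeadR (liftOrd ltC) (deltaMap (mono k u * s)) (dword (u * ms)) ∧
      (deltaMap (mono k u * s) : MonoidAlgebra k (FreeMonoid X)).coeff (dword (u * ms)) = s.coeff ms := by
  rw [delta_as_mapDomain]
  have hinj : Function.Injective (fun m : Multiplicative (Multiset X) => dword (X := X) (u * m)) :=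
    dword_injective.comp (mul_right_injective u)
  exact isLead_mapDomain _ hinj s ms hms.1
    (fun m hm hne => Or.inl (by rw [gam_dword, gam_dword]; exact ltC_mul hC u (hms.2 m hm hne)))

noncomputable def gamHom : FreeMonoid X →* Multiplicative (Multiset X) :=
  FreeMonoid.lift (fun x => Multiplicative.ofAdd ({x} : Multiset X))

lemma gamHom_apply (v : FreeMonoid X) : gamHom v = gam v := by
  induction v using FreeMonoid.recOn with
  | one => simp [gam_one]
  | of_mul x xs ih =>
      have h1 : gamHom (FreeMonoid.of x * xs) =
          Multiplicative.ofAdd ({x} : Multiset X) * gamHom xs := by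
        rw [map_mul]
        congr 1
      have h2 : gam (FreeMonoid.of x * xs) =
          Multiplicative.ofAdd ({x} : Multiset X) * gam xs := by
        rw [gam_mul]
        congr 1
      rw [h1, ih, h2]

end Aux4
noncomputable def Gam (k : Type*) {X : Type*} [Field k] [LinearOrder X] :
    MonoidAlgebra k (FreeMonoid X) →+* MonoidAlgebra k (Multiplicative (Multiset X)) :=
  MonoidAlgebra.mapDomainRingHom k gamHom

section Aux5
variable {k X : Type*} [Field k] [LinearOrder X]
variable {ltC : Multiplicative (Multiset X) → Multiplicative (Multiset X) → Prop}

lemma Gam_apply (f : MonoidAlgebra k (FreeMonoid X)) :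
    Gam k f = MonoidAlgebra.mapDomain gam f := by
  show MonoidAlgebra.ofCoeff (Finsupp.mapDomain (⇑gamHom) f.coeff) = MonoidAlgebra.ofCoeff _
  congr 1
  apply Finsupp.mapDomain_congr
  intro x _
  exact gamHom_apply x

lemma Gam_delta (F : MonoidAlgebra k (Multiplicative (Multiset X))) :
    Gam k (deltaMap F) = F := by
  rw [Gam_apply]
  show MonoidAlgebra.mapDomain gam (MonoidAlgebra.mapDomain dword F) = F
  rw [← mdom_comp]
  have : (gam ∘ fun m : Multiplicative (Multiset X) => dword (X := X) m) = id := by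
    funext m; exact gam_dword m
  rw [this, mdom_id]

lemma Gam_mono (v : FreeMonoid X) : Gam k (mono k v) = mono k (gam v) := by
  rw [Gam_apply, mono_def, mono_def]
  exact MonoidAlgebra.mapDomain_single

lemma Gam_comm (i j : X) :
    Gam k (mono k (FreeMonoid.of i * FreeMonoid.of j) -
      mono k (FreeMonoid.of j * FreeMonoid.of i)) = 0 := by
  rw [map_sub, Gam_mono, Gam_mono]
  rw [show gam (FreeMonoid.of i * FreeMonoid.of j) = gam (FreeMonoid.of j * FreeMonoid.of i) from
    gam_eq_iff.2 (by rw [toList_of_mul, toList_of_mul]; exact List.Perm.swap j i [])]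
  ring

end Aux5
section Aux6
variable {k X : Type*} [Field k] [LinearOrder X]
variable {ltC : Multiplicative (Multiset X) → Multiplicative (Multiset X) → Prop}

lemma min_split : ∀ (l : List X), l ≠ [] →
    ∃ c x d, l = c ++ x :: d ∧ (∀ y ∈ l, x ≤ y) ∧ (∀ y ∈ c, x < y) := by
  intro l
  induction l with
  | nil => intro h; exact absurd rfl h
  | cons a l ih =>
      intro _
      rcases eq_or_ne l [] with rfl | hne
      · exact ⟨[], a, [], rfl, by simp, by simp⟩
      · obtain ⟨c, x, d, h1, h2, h3⟩ := ih hne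
        rcases lt_or_ge x a with hlt | hle
        · refine ⟨a :: c, x, d, by rw [h1, List.cons_append], ?_, ?_⟩
          · intro y hy
            rcases List.mem_cons.1 hy with rfl | hy
            · exact le_of_lt hlt
            · exact h2 y hy
          · intro y hy
            rcases List.mem_cons.1 hy with rfl | hy
            · exact hlt
            · exact h3 y hy
        · refine ⟨[], a, l, rfl, ?_, by simp⟩
          intro y hy
          rcases List.mem_cons.1 hy with rfl | hy
          · exact le_rfl
          · exact hle.trans (h2 y hy)

lemma ofList_cons (x : X) (t : List X) :
    FreeMonoid.ofList (x :: t) = FreeMonoid.of x * FreeMonoid.ofList t := rfl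

lemma dword_cons_min {x : X} {M : Multiset X} (h : ∀ y ∈ M, x ≤ y) :
    dword (Multiplicative.ofAdd (x ::ₘ M)) =
      FreeMonoid.of x * dword (Multiplicative.ofAdd M) := by
  apply toList_injective
  unfold dword
  rw [FreeMonoid.toList_ofList]
  show _ = x :: Multiset.sort (Multiplicative.toAdd (Multiplicative.ofAdd M)) (· ≤ ·)
  simp only [toAdd_ofAdd]
  refine (fun hp hs => List.Perm.eq_of_pairwise' (Multiset.pairwise_sort _ _) hs hp) ?_ ?_
  · rw [← Multiset.coe_eq_coe]
    show ((Multiset.sort (x ::ₘ M) (· ≤ ·) : List X) : Multiset X) = _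
    rw [Multiset.sort_eq, ← Multiset.cons_coe, Multiset.sort_eq]
  · rw [List.pairwise_cons]
    exact ⟨fun y hy => h y ((Multiset.mem_sort _).1 hy), Multiset.pairwise_sort _ _⟩

lemma dword_add_of_le {A B : Multiset X} (h : ∀ a ∈ A, ∀ b ∈ B, a ≤ b) :
    dword (Multiplicative.ofAdd (A + B)) =
      dword (Multiplicative.ofAdd A) * dword (Multiplicative.ofAdd B) := by
  apply toList_injective
  unfold dword
  rw [FreeMonoid.toList_ofList, FreeMonoid.toList_mul, FreeMonoid.toList_ofList,
    FreeMonoid.toList_ofList]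
  simp only [toAdd_ofAdd]
  refine (fun hp hs => List.Perm.eq_of_pairwise' (Multiset.pairwise_sort _ _) hs hp) ?_ ?_
  · rw [← Multiset.coe_eq_coe]
    show ((Multiset.sort (A + B) (· ≤ ·) : List X) : Multiset X) = _
    rw [Multiset.sort_eq, ← Multiset.coe_add, Multiset.sort_eq, Multiset.sort_eq]
  · rw [List.pairwise_append]
    refine ⟨Multiset.pairwise_sort _ _, Multiset.pairwise_sort _ _, ?_⟩
    intro a ha b hb
    exact h a ((Multiset.mem_sort _).1 ha) b ((Multiset.mem_sort _).1 hb)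

lemma move (hC : MonOrd ltC) {S' : Set (MonoidAlgebra k (FreeMonoid X))}
    (hcomm : commSet k X ⊆ S') :
    ∀ (c : List X) (x : X) (d : List X), (∀ y ∈ c, x < y) →
      (mono k (FreeMonoid.ofList (c ++ x :: d)) - mono k (FreeMonoid.ofList (x :: (c ++ d))))
        ∈ spanLE (liftOrd ltC) S' (FreeMonoid.ofList (c ++ x :: d)) := by
  intro c
  induction c with
  | nil =>
      intro x d _
      simp only [List.nil_append, sub_self]
      exact Submodule.zero_mem _
  | cons y c' ih =>
      intro x d hc
      have hxy : x < y := hc y (by simp)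
      have hc' : ∀ y' ∈ c', x < y' := fun y' hy' => hc y' (by simp [hy'])
      have hA : (mono k (FreeMonoid.ofList ((y :: c') ++ x :: d)) -
          mono k (FreeMonoid.ofList (y :: x :: (c' ++ d))))
          ∈ spanLE (liftOrd ltC) S' (FreeMonoid.ofList ((y :: c') ++ x :: d)) := by
        have h0 := spanLE_mul_left hC (S' := S') (FreeMonoid.of y) (ih x d hc')
        rw [mul_sub, mono_mul, mono_mul] at h0
        exact h0
      have hmem : (mono k (FreeMonoid.of y * FreeMonoid.of x) -
          mono k (FreeMonoid.of x * FreeMonoid.of y)) ∈ S' := hcomm ⟨y, x, hxy, rfl⟩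
      have hlead := (comm_lead (k := k) hC hxy).1
      have hbound : (1 : FreeMonoid X) * (FreeMonoid.of y * FreeMonoid.of x)
          * FreeMonoid.ofList (c' ++ d) = FreeMonoid.ofList ((y :: c') ++ x :: d) ∨
          liftOrd ltC ((1 : FreeMonoid X) * (FreeMonoid.of y * FreeMonoid.of x)
            * FreeMonoid.ofList (c' ++ d)) (FreeMonoid.ofList ((y :: c') ++ x :: d)) := by
        rw [one_mul]
        have hw : FreeMonoid.of y * FreeMonoid.of x * FreeMonoid.ofList (c' ++ d) =
            FreeMonoid.ofList (y :: x :: (c' ++ d)) := rfl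
        rw [hw]
        cases c' with
        | nil => exact Or.inl rfl
        | cons z c'' =>
            right
            right
            constructor
            · apply gam_eq_iff.2
              show List.Perm (y :: x :: (z :: c'' ++ d)) (y :: (z :: c'' ++ x :: d))
              exact List.Perm.cons y (List.perm_middle.symm)
            · show List.Lex (· < ·) (y :: x :: (z :: c'' ++ d)) (y :: (z :: c'' ++ x :: d))
              exact List.Lex.cons (List.Lex.rel (hc' z (by simp)))
      have hB : (mono k (FreeMonoid.ofList (y :: x :: (c' ++ d))) -
          mono k (FreeMonoid.ofList (x :: ((y :: c') ++ d))))
          ∈ spanLE (liftOrd ltC) S' (FreeMonoid.ofList ((y :: c') ++ x :: d)) := by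
        have h0 := atomLE_mem (k := k) hmem hlead hbound
        rw [mono_one, one_mul, sub_mul, mono_mul, mono_mul] at h0
        exact h0
      have := Submodule.add_mem _ hA hB
      rw [sub_add_sub_cancel] at this
      exact this

end Aux6
section Aux7
variable {k X : Type*} [Field k] [LinearOrder X]
variable {ltC : Multiplicative (Multiset X) → Multiplicative (Multiset X) → Prop}

lemma gam_ofList (l : List X) : gam (FreeMonoid.ofList l) = Multiplicative.ofAdd (↑l : Multiset X) := rfl

lemma sort_span (hC : MonOrd ltC) {S' : Set (MonoidAlgebra k (FreeMonoid X))}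
    (hcomm : commSet k X ⊆ S') :
    ∀ (n : ℕ) (l : List X), l.length ≤ n →
      (mono k (FreeMonoid.ofList l) - mono k (dword (gam (FreeMonoid.ofList l))))
        ∈ spanLE (liftOrd ltC) S' (FreeMonoid.ofList l) := by
  intro n
  induction n with
  | zero =>
      intro l hl
      have : l = [] := List.length_eq_zero_iff.1 (Nat.le_zero.1 hl)
      subst this
      rw [dword_gam_of_sorted (by simp [FreeMonoid.toList_ofList])]
      simp only [sub_self]
      exact Submodule.zero_mem _
  | succ n ih =>
      intro l hl
      rcases eq_or_ne l [] with rfl | hne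
      · rw [dword_gam_of_sorted (by simp [FreeMonoid.toList_ofList])]
        simp only [sub_self]
        exact Submodule.zero_mem _
      obtain ⟨c, x, d, hsplit, hmin, hstrict⟩ := min_split l hne
      have hperm : List.Perm l (x :: (c ++ d)) := by rw [hsplit]; exact List.perm_middle
      have key1 : gam (FreeMonoid.ofList l) =
          Multiplicative.ofAdd (x ::ₘ (↑(c ++ d) : Multiset X)) := by
        rw [gam_ofList]
        congr 1
        rw [Multiset.cons_coe, Multiset.coe_eq_coe]
        exact hperm
      have key2 : dword (gam (FreeMonoid.ofList l)) =
          FreeMonoid.of x * dword (gam (FreeMonoid.ofList (c ++ d))) := by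
        rw [key1, dword_cons_min, gam_ofList]
        intro y hy
        have hy' : y ∈ c ++ d := by exact_mod_cast hy
        exact hmin y (hperm.symm.subset (List.mem_cons_of_mem x hy'))
      have T1 : (mono k (FreeMonoid.ofList l) - mono k (FreeMonoid.ofList (x :: (c ++ d))))
          ∈ spanLE (liftOrd ltC) S' (FreeMonoid.ofList l) := by
        rw [hsplit]
        exact move hC hcomm c x d hstrict
      have T2 : (mono k (FreeMonoid.ofList (x :: (c ++ d))) -
          mono k (FreeMonoid.of x * dword (gam (FreeMonoid.ofList (c ++ d)))))
          ∈ spanLE (liftOrd ltC) S' (FreeMonoid.ofList l) := by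
        have hlen : (c ++ d).length ≤ n := by
          have := congrArg List.length hsplit
          simp [List.length_append] at this ⊢
          omega
        have h0 := spanLE_mul_left hC (S' := S') (FreeMonoid.of x) (ih (c ++ d) hlen)
        rw [mul_sub, mono_mul, mono_mul] at h0
        have hle : FreeMonoid.of x * FreeMonoid.ofList (c ++ d) = FreeMonoid.ofList l ∨
            liftOrd ltC (FreeMonoid.of x * FreeMonoid.ofList (c ++ d)) (FreeMonoid.ofList l) := by
          cases c with
          | nil => left; rw [hsplit]; rfl
          | cons z c'' =>
              right
              right
              refine ⟨gam_eq_iff.2 hperm.symm, ?_⟩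
              rw [hsplit]
              exact List.Lex.rel (hstrict z (by simp))
        exact spanLE_mono hC hle h0
      have := Submodule.add_mem _ T1 T2
      rw [sub_add_sub_cancel, ← key2] at this
      exact this

lemma straighten (hC : MonOrd ltC) {S' : Set (MonoidAlgebra k (FreeMonoid X))}
    (hcomm : commSet k X ⊆ S') (h : MonoidAlgebra k (FreeMonoid X)) (w : FreeMonoid X)
    (hs : ∀ v ∈ h.coeff.support, liftOrd ltC v w) :
    (h - deltaMap (MonoidAlgebra.mapDomain gam h)) ∈ trivSpan (liftOrd ltC) S' w := by
  have expand : h - deltaMap (MonoidAlgebra.mapDomain gam h) =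
      ∑ v ∈ h.coeff.support, (h.coeff v) • (mono k v - mono k (dword (gam v))) := by
    have h1 : deltaMap (MonoidAlgebra.mapDomain gam h) =
        MonoidAlgebra.mapDomain (fun v : FreeMonoid X => dword (gam v)) h := by
      show MonoidAlgebra.mapDomain dword _ = _
      rw [← mdom_comp]
      rfl
    rw [h1]
    have e1 : h = ∑ v ∈ h.coeff.support, (h.coeff v) • (mono k v) := by
      conv_lhs => rw [← MonoidAlgebra.sum_coeff_single h]
      rw [Finsupp.sum]
      apply Finset.sum_congr rfl
      intro v _
      rw [mono_def, MonoidAlgebra.smul_single, smul_eq_mul, mul_one]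
    have e2 : MonoidAlgebra.mapDomain (fun v : FreeMonoid X => dword (gam v)) h =
        ∑ v ∈ h.coeff.support, (h.coeff v) • (mono k (dword (gam v))) := by
      show MonoidAlgebra.ofCoeff (Finsupp.mapDomain _ h.coeff) = _
      rw [Finsupp.mapDomain, Finsupp.sum, MonoidAlgebra.ofCoeff_sum]
      apply Finset.sum_congr rfl
      intro v _
      rw [mono_def, MonoidAlgebra.smul_single, smul_eq_mul, mul_one]
      rfl
    calc h - _ = ∑ v ∈ h.coeff.support, (h.coeff v) • (mono k v) -
        ∑ v ∈ h.coeff.support, (h.coeff v) • (mono k (dword (gam v))) := by rw [← e1, ← e2]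
      _ = _ := by
        rw [← Finset.sum_sub_distrib]
        apply Finset.sum_congr rfl
        intro v _
        rw [smul_sub]
  rw [expand]
  apply Submodule.sum_mem
  intro v hv
  apply Submodule.smul_mem
  have hsort := sort_span hC hcomm v.toList.length v.toList le_rfl
  have hofl : FreeMonoid.ofList v.toList = v := rfl
  rw [hofl] at hsort
  exact spanLE_le_trivSpan hC (hs v hv) hsort

end Aux7
section Aux8
variable {k X : Type*} [Field k] [LinearOrder X]
variable {ltC : Multiplicative (Multiset X) → Multiplicative (Multiset X) → Prop}

lemma finset_max (hC : MonOrd ltC) (t : Finset (Multiplicative (Multiset X))) :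
    t.Nonempty → ∃ m ∈ t, ∀ u ∈ t, u ≠ m → ltC u m := by
  classical
  induction t using Finset.induction_on with
  | empty => rintro ⟨x, hx⟩; simp at hx
  | @insert a t ha ih =>
      intro _
      rcases t.eq_empty_or_nonempty with rfl | hne
      · refine ⟨a, by simp, ?_⟩
        intro u hu hneu
        simp at hu
        exact absurd hu hneu
      · obtain ⟨m, hm, hmax⟩ := ih hne
        rcases ltC_tri hC a m with h | h | h
        · refine ⟨m, by simp [hm], ?_⟩
          intro u hu hne'
          rcases Finset.mem_insert.1 hu with rfl | hu
          · exact h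
          · exact hmax u hu hne'
        · subst h
          refine ⟨a, by simp, ?_⟩
          intro u hu hne'
          rcases Finset.mem_insert.1 hu with rfl | hu
          · exact absurd rfl hne'
          · exact hmax u hu hne'
        · refine ⟨a, by simp, ?_⟩
          intro u hu hne'
          rcases Finset.mem_insert.1 hu with rfl | hu
          · exact absurd rfl hne'
          · rcases eq_or_ne u m with rfl | hum
            · exact h
            · exact ltC_trans hC (hmax u hu hum) h

lemma division (hC : MonOrd ltC) {S : Set (MonoidAlgebra k (Multiplicative (Multiset X)))}
    (hmonic : ∀ s ∈ S, MonicR ltC s)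
    (hGB : ∀ f ∈ Ideal.span S, f ≠ 0 → ∀ mf : Multiplicative (Multiset X),
      IsLeadR ltC f mf → ∃ s ∈ S, ∃ ms : Multiplicative (Multiset X),
        IsLeadR ltC s ms ∧ ms ∣ mf) :
    ∀ (W : Multiplicative (Multiset X)) (G : MonoidAlgebra k (Multiplicative (Multiset X))),
      G ∈ Ideal.span S → (∀ m ∈ G.coeff.support, m = W ∨ ltC m W) →
      ∃ (n : ℕ) (α : Fin n → k) (u : Fin n → Multiplicative (Multiset X))
        (s : Fin n → MonoidAlgebra k (Multiplicative (Multiset X))),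
        (∀ i, s i ∈ S) ∧ (G = ∑ i, α i • (mono k (u i) * s i)) ∧
        ∀ i, ∃ ms, IsLeadR ltC (s i) ms ∧ (u i * ms = W ∨ ltC (u i * ms) W) := by
  classical
  intro W
  induction W using WellFounded.induction hC.2.1 with
  | _ W ih =>
  intro G hGspan hGbound
  rcases eq_or_ne G 0 with rfl | hG0
  · exact ⟨0, Fin.elim0, Fin.elim0, Fin.elim0, fun i => i.elim0, by simp, fun i => i.elim0⟩
  obtain ⟨W', hW'supp, hW'max⟩ := finset_max hC G.coeff.support (Finsupp.support_nonempty_iff.2 (MonoidAlgebra.coeff_eq_zero.not.2 hG0))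
  have hlead : IsLeadR ltC G W' := ⟨hW'supp, hW'max⟩
  obtain ⟨s, hsS, ms, hms, hdvd⟩ := hGB G hGspan hG0 W' hlead
  obtain ⟨r, hr⟩ := hdvd
  have hsm : s.coeff ms = 1 := by
    obtain ⟨ms0, hms0, hcoef⟩ := hmonic s hsS
    rw [lead_unique (ltC_irrefl hC) (fun h1 h2 => ltC_trans hC h1 h2) hms hms0]
    exact hcoef
  set c := G.coeff W' with hc
  set G' := G - c • (mono k r * s) with hG'
  have hrs : mono k r * s = MonoidAlgebra.mapDomain (fun m => r * m) s := mul_mono_left r s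
  have happ : (mono k r * s).coeff W' = 1 := by
    rw [hrs]
    rw [show W' = r * ms by rw [hr, mul_comm]]
    rw [mdom_apply (mul_right_injective r) s ms, hsm]
  have hG'span : G' ∈ Ideal.span S := by
    apply Submodule.sub_mem _ hGspan
    rw [Algebra.smul_def]
    exact Ideal.mul_mem_left _ _ (Ideal.mul_mem_left _ _ (Ideal.subset_span hsS))
  have hG'supp : ∀ m ∈ G'.coeff.support, ltC m W' := by
    intro m hm
    have hmW' : m ≠ W' := by
      intro heq
      have hcoefG' : G'.coeff W' = 0 := by
        rw [hG', MonoidAlgebra.coeff_sub, Finsupp.sub_apply, MonoidAlgebra.coeff_smul, Finsupp.smul_apply, happ, smul_eq_mul, mul_one, sub_self]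
      rw [heq] at hm
      exact (Finsupp.mem_support_iff.1 hm) hcoefG'
    have hsub : G'.coeff.support ⊆ G.coeff.support ∪ (c • (mono k r * s)).coeff.support := by
      rw [hG', MonoidAlgebra.coeff_sub]
      exact Finsupp.support_sub
    rcases Finset.mem_union.1 (hsub hm) with hmem | hmem
    · exact hW'max m hmem hmW'
    · have hmem2 : m ∈ (mono k r * s).coeff.support := by
        rw [MonoidAlgebra.coeff_smul] at hmem; exact Finsupp.support_smul hmem
      rw [hrs] at hmem2
      have := mdom_support hmem2
      obtain ⟨m'', hm'', hmeq⟩ := Finset.mem_image.1 this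
      rcases eq_or_ne m'' ms with rfl | hne''
      · exact absurd (by rw [← hmeq, hr, mul_comm]) hmW'
      · rw [← hmeq]
        rw [hr, mul_comm ms r]
        exact ltC_mul hC r (hms.2 m'' hm'' hne'')
  rcases eq_or_ne G' 0 with hG'0 | hG'0
  · have hGeq : G = c • (mono k r * s) := by
      have := sub_eq_zero.1 hG'0
      exact this
    refine ⟨1, fun _ => c, fun _ => r, fun _ => s, fun _ => hsS, ?_, ?_⟩
    · rw [Fin.sum_univ_one]
      exact hGeq
    · intro _
      refine ⟨ms, hms, ?_⟩
      rw [mul_comm, ← hr]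
      exact hGbound W' hW'supp
  · obtain ⟨W'', hW''supp, hW''max⟩ := finset_max hC G'.coeff.support (Finsupp.support_nonempty_iff.2 (MonoidAlgebra.coeff_eq_zero.not.2 hG'0))
    have hW''W' : ltC W'' W' := hG'supp W'' hW''supp
    have hW''W : ltC W'' W := by
      rcases hGbound W' hW'supp with h | h
      · rw [← h]; exact hW''W'
      · exact ltC_trans hC hW''W' h
    obtain ⟨n, α, u, ss, hssS, hsum, hbnd⟩ := ih W'' hW''W G' hG'span
      (fun m hm => (eq_or_ne m W'').elim Or.inl (fun hne => Or.inr (hW''max m hm hne)))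
    refine ⟨n+1, Fin.cons c α, Fin.cons r u, Fin.cons s ss, ?_, ?_, ?_⟩
    · intro i
      refine Fin.cases ?_ ?_ i
      · exact hsS
      · intro j; exact hssS j
    · rw [Fin.sum_univ_succ]
      simp only [Fin.cons_zero, Fin.cons_succ]
      rw [← hsum]
      rw [hG', add_comm]
      exact (sub_add_cancel G _).symm
    · intro i
      refine Fin.cases ?_ ?_ i
      · refine ⟨ms, hms, ?_⟩
        simp only [Fin.cons_zero]
        rw [mul_comm, ← hr]
        exact hGbound W' hW'supp
      · intro j
        obtain ⟨msj, hmsj, hb⟩ := hbnd j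
        refine ⟨msj, hmsj, Or.inr ?_⟩
        simp only [Fin.cons_succ]
        rcases hb with h | h
        · rw [h]; exact hW''W
        · exact ltC_trans hC h hW''W

end Aux8
/-- the lifted basis `S'` -/
def bigS {k X : Type*} [Field k] [LinearOrder X]
    (ltC : Multiplicative (Multiset X) → Multiplicative (Multiset X) → Prop)
    (S : Set (MonoidAlgebra k (Multiplicative (Multiset X)))) :
    Set (MonoidAlgebra k (FreeMonoid X)) :=
  {p : MonoidAlgebra k (FreeMonoid X) | ∃ s ∈ S,
      ∃ ms : Multiplicative (Multiset X), IsLeadR ltC s ms ∧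
      ∃ u ∈ UU ms, p = deltaMap (mono k u * s)} ∪ commSet k X

section Aux9
variable {k X : Type*} [Field k] [LinearOrder X]
variable {ltC : Multiplicative (Multiset X) → Multiplicative (Multiset X) → Prop}

lemma comm_subset_bigS (S : Set (MonoidAlgebra k (Multiplicative (Multiset X)))) :
    commSet k X ⊆ bigS ltC S := Set.subset_union_right

lemma ofAdd_mul (a b : Multiset X) :
    Multiplicative.ofAdd a * Multiplicative.ofAdd b = Multiplicative.ofAdd (a + b) := rfl

lemma delta_mono_mem (hC : MonOrd ltC) {S : Set (MonoidAlgebra k (Multiplicative (Multiset X)))}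
    (u : Multiplicative (Multiset X)) {s : MonoidAlgebra k (Multiplicative (Multiset X))}
    {ms : Multiplicative (Multiset X)} (hsS : s ∈ S) (hms : IsLeadR ltC s ms)
    {w : FreeMonoid X} (hbound : liftOrd ltC (dword (u * ms)) w) :
    deltaMap (mono k u * s) ∈ trivSpan (liftOrd ltC) (bigS ltC S) w := by
  classical
  set uA := Multiplicative.toAdd u with huA
  set msA := Multiplicative.toAdd ms with hmsA
  set lo := uA.filter (fun y => ¬ ∃ z ∈ msA, z < y) with hlo
  set rest := uA.filter (fun y => ∃ z ∈ msA, z < y) with hrest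
  set mid := rest.filter (fun y => ∃ z ∈ msA, y < z) with hmid
  set hi := rest.filter (fun y => ¬ ∃ z ∈ msA, y < z) with hhi
  have hup : uA = lo + (mid + hi) := by
    have h1 := Multiset.filter_add_not (fun y => ∃ z ∈ msA, z < y) uA
    have h2 := Multiset.filter_add_not (fun y => ∃ z ∈ msA, y < z) rest
    rw [← hlo, ← hrest] at h1
    rw [← hmid, ← hhi] at h2
    rw [← h1, ← h2]
    abel
  -- membership facts
  have hlo_le : ∀ a ∈ lo, ∀ z ∈ msA, a ≤ z := by
    intro a ha z hz
    have h := (Multiset.mem_filter.1 ha).2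
    push_neg at h
    exact h z hz
  have hrest_p : ∀ b ∈ rest, ∃ z ∈ msA, z < b := fun b hb => (Multiset.mem_filter.1 hb).2
  have hhi_ge : ∀ b ∈ hi, ∀ z ∈ msA, z ≤ b := by
    intro b hb z hz
    have h := (Multiset.mem_filter.1 hb).2
    push_neg at h
    exact h z hz
  have hmid_q2 : ∀ a ∈ mid, ∃ z ∈ msA, a < z := fun a ha => (Multiset.mem_filter.1 ha).2
  have hsep1 : ∀ a ∈ lo, ∀ b ∈ (mid + msA) + hi, a ≤ b := by
    intro a ha b hb
    rcases Multiset.mem_add.1 hb with hb | hb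
    · rcases Multiset.mem_add.1 hb with hb | hb
      · obtain ⟨z, hz, hzb⟩ := hrest_p b (Multiset.mem_of_mem_filter hb)
        exact (hlo_le a ha z hz).trans (le_of_lt hzb)
      · exact hlo_le a ha b hb
    · obtain ⟨z, hz, hzb⟩ := hrest_p b (Multiset.mem_of_mem_filter hb)
      exact (hlo_le a ha z hz).trans (le_of_lt hzb)
  have hsep2 : ∀ a ∈ mid + msA, ∀ b ∈ hi, a ≤ b := by
    intro a ha b hb
    rcases Multiset.mem_add.1 ha with ha | ha
    · obtain ⟨z, hz, haz⟩ := hmid_q2 a ha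
      exact (le_of_lt haz).trans (hhi_ge b hb z hz)
    · exact hhi_ge b hb a ha
  -- the block decomposition of the leading word
  have hmult : u * ms = Multiplicative.ofAdd (lo + (((mid + msA) + hi))) := by
    have : u * ms = Multiplicative.ofAdd (uA + msA) := by
      rw [huA, hmsA, ← ofAdd_mul]
      simp
    rw [this]
    congr 1
    rw [hup]
    abel
  have key : dword (u * ms) =
      dword (Multiplicative.ofAdd lo) * dword (Multiplicative.ofAdd (mid + msA)) *
        dword (Multiplicative.ofAdd hi) := by
    rw [hmult, dword_add_of_le hsep1, dword_add_of_le hsep2, mul_assoc]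
  have hmidUU : Multiplicative.ofAdd mid ∈ UU ms := by
    intro y hy
    simp only [toAdd_ofAdd] at hy
    exact ⟨hrest_p y (Multiset.mem_of_mem_filter hy), hmid_q2 y hy⟩
  set s' := deltaMap (mono k (Multiplicative.ofAdd mid) * s) with hs'
  have hS' : s' ∈ bigS ltC S :=
    Or.inl ⟨s, hsS, ms, hms, Multiplicative.ofAdd mid, hmidUU, rfl⟩
  have hmidms : Multiplicative.ofAdd mid * ms = Multiplicative.ofAdd (mid + msA) := by
    rw [hmsA, ← ofAdd_mul]
    simp
  have hlead' := (delt_lead (k := k) hC hms (Multiplicative.ofAdd mid)).1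
  set A := dword (Multiplicative.ofAdd lo) with hA
  set B := dword (Multiplicative.ofAdd hi) with hB
  set q := mono k A * s' * mono k B with hqdef
  have hq : q ∈ trivSpan (liftOrd ltC) (bigS ltC S) w := by
    apply atom_mem hS' hlead'
    rw [show A * dword (Multiplicative.ofAdd mid * ms) * B = dword (u * ms) by
      rw [hmidms, key]]
    exact hbound
  set h0 := deltaMap (mono k u * s) - q with hh0
  have hGamq : Gam k q = mono k u * s := by
    rw [hqdef, map_mul, map_mul, Gam_mono, Gam_mono, hs', Gam_delta, hA, hB, gam_dword, gam_dword]
    have : mono k (Multiplicative.ofAdd lo) * (mono k (Multiplicative.ofAdd mid) * s) *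
        mono k (Multiplicative.ofAdd hi) =
        (mono k (Multiplicative.ofAdd lo) * mono k (Multiplicative.ofAdd mid) *
          mono k (Multiplicative.ofAdd hi)) * s := by ring
    rw [this, mono_mul, mono_mul, ofAdd_mul, ofAdd_mul]
    congr 1
    rw [huA] at hup
    rw [show lo + mid + hi = Multiplicative.toAdd u by rw [hup]; abel]
    simp
  have hGamh0 : MonoidAlgebra.mapDomain gam h0 = 0 := by
    have : MonoidAlgebra.mapDomain gam h0 = Gam k h0 := (Gam_apply h0).symm
    rw [this, hh0, map_sub, Gam_delta, hGamq, sub_self]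
  have hsupp : ∀ v ∈ h0.coeff.support, liftOrd ltC v w := by
    intro v hv
    have hsub : h0.coeff.support ⊆ (deltaMap (mono k u * s)).coeff.support ∪ q.coeff.support := by
      rw [hh0, MonoidAlgebra.coeff_sub]; exact Finsupp.support_sub
    rcases Finset.mem_union.1 (hsub hv) with hmem | hmem
    · rw [delta_as_mapDomain] at hmem
      obtain ⟨m, hm, rfl⟩ := Finset.mem_image.1 (mdom_support hmem)
      rcases eq_or_ne m ms with rfl | hne
      · exact hbound
      · exact HB hC (ltC_mul hC u (hms.2 m hm hne)) hbound (gam_dword _)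
    · have hq2' : q = MonoidAlgebra.mapDomain
          (fun m : Multiplicative (Multiset X) => A * dword (Multiplicative.ofAdd mid * m) * B) s := by
        rw [hqdef, hs', delta_as_mapDomain, sandwich, ← mdom_comp]
        rfl
      rw [hq2'] at hmem
      obtain ⟨m, hm, rfl⟩ := Finset.mem_image.1 (mdom_support hmem)
      have hgam : gam (A * dword (Multiplicative.ofAdd mid * m) * B) = u * m := by
        rw [gam_mul, gam_mul, hA, hB, gam_dword, gam_dword, gam_dword]
        rw [show Multiplicative.ofAdd lo * (Multiplicative.ofAdd mid * m) *
            Multiplicative.ofAdd hi = (Multiplicative.ofAdd lo * Multiplicative.ofAdd mid *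
              Multiplicative.ofAdd hi) * m by
          simp only [mul_assoc, mul_comm, mul_left_comm]]
        congr 1
        rw [ofAdd_mul, ofAdd_mul]
        rw [huA] at hup
        rw [show lo + mid + hi = Multiplicative.toAdd u by rw [hup]; abel]
        simp
      rcases eq_or_ne m ms with he | hne
      · rw [he, show A * dword (Multiplicative.ofAdd mid * ms) * B = dword (u * ms) by
          rw [hmidms, key]]
        exact hbound
      · exact HB hC (ltC_mul hC u (hms.2 m hm hne)) hbound hgam
  have hh0mem : h0 ∈ trivSpan (liftOrd ltC) (bigS ltC S) w := by
    have := straighten hC (comm_subset_bigS (ltC := ltC) S) h0 w hsupp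
    rw [hGamh0] at this
    rw [show deltaMap (0 : MonoidAlgebra k (Multiplicative (Multiset X))) = 0 from
      MonoidAlgebra.mapDomain_zero _] at this
    rwa [sub_zero] at this
  have : deltaMap (mono k u * s) = h0 + q := by rw [hh0, sub_add_cancel]
  rw [this]
  exact Submodule.add_mem _ hh0mem hq

end Aux9
section Aux10
variable {k X : Type*} [Field k] [LinearOrder X]
variable {ltC : Multiplicative (Multiset X) → Multiplicative (Multiset X) → Prop}

lemma master (hC : MonOrd ltC) {S : Set (MonoidAlgebra k (Multiplicative (Multiset X)))}
    (hmonic : ∀ s ∈ S, MonicR ltC s)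
    (hGB : ∀ f ∈ Ideal.span S, f ≠ 0 → ∀ mf : Multiplicative (Multiset X),
      IsLeadR ltC f mf → ∃ s ∈ S, ∃ ms : Multiplicative (Multiset X),
        IsLeadR ltC s ms ∧ ms ∣ mf)
    (p : MonoidAlgebra k (FreeMonoid X)) (w : FreeMonoid X)
    (h1 : ∀ v ∈ p.coeff.support, liftOrd ltC v w)
    (h2 : MonoidAlgebra.mapDomain gam p ∈ Ideal.span S) :
    p ∈ trivSpan (liftOrd ltC) (bigS ltC S) w := by
  classical
  set G := MonoidAlgebra.mapDomain gam p with hG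
  have hGsupp : ∀ m ∈ G.coeff.support, liftOrd ltC (dword m) w := by
    intro m hm
    obtain ⟨v, hv, rfl⟩ := Finset.mem_image.1 (mdom_support hm)
    rcases dword_le ltC v with he | hlt
    · rw [he]; exact h1 v hv
    · exact lift_trans hC hlt (h1 v hv)
  have hst := straighten hC (comm_subset_bigS (ltC := ltC) S) p w h1
  suffices hδ : deltaMap G ∈ trivSpan (liftOrd ltC) (bigS ltC S) w by
    have := Submodule.add_mem _ hst hδ
    rwa [sub_add_cancel] at this
  rcases eq_or_ne G 0 with hG0 | hG0
  · rw [hG0, show deltaMap (0 : MonoidAlgebra k (Multiplicative (Multiset X))) = 0 from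
      MonoidAlgebra.mapDomain_zero _]
    exact Submodule.zero_mem _
  obtain ⟨W, hWsupp, hWmax⟩ := finset_max hC G.coeff.support (Finsupp.support_nonempty_iff.2 (MonoidAlgebra.coeff_eq_zero.not.2 hG0))
  obtain ⟨n, α, u, ss, hssS, hsum, hbnd⟩ := division hC hmonic hGB W G h2
    (fun m hm => (eq_or_ne m W).elim Or.inl (fun hne => Or.inr (hWmax m hm hne)))
  have hδsum : deltaMap G = ∑ i, α i • deltaMap (mono k (u i) * ss i) := by
    rw [hsum]
    show (MonoidAlgebra.mapDomainLinearMap k k (dword (X := X))) (∑ i, α i • (mono k (u i) * ss i)) = _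
    rw [map_sum (MonoidAlgebra.mapDomainLinearMap k k dword) _ Finset.univ]
    apply Finset.sum_congr rfl
    intro i _
    rw [map_smul]
    rfl
  rw [hδsum]
  apply Submodule.sum_mem
  intro i _
  apply Submodule.smul_mem
  obtain ⟨ms, hms, hb⟩ := hbnd i
  apply delta_mono_mem hC (u i) (hssS i) hms
  rcases hb with h | h
  · rw [h]; exact hGsupp W hWsupp
  · exact HB hC h (hGsupp W hWsupp) (gam_dword _)

end Aux10
section Aux11
variable {k X : Type*} [Field k] [LinearOrder X]
variable {ltC : Multiplicative (Multiset X) → Multiplicative (Multiset X) → Prop}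

lemma fm_sandwich_inj (a b : FreeMonoid X) :
    Function.Injective (fun v : FreeMonoid X => a * v * b) := by
  intro u v h
  have h2 := congrArg FreeMonoid.toList h
  simp only [FreeMonoid.toList_mul] at h2
  exact List.append_cancel_left (List.append_cancel_right h2)

lemma bigS_lead_coeff (hC : MonOrd ltC) {S : Set (MonoidAlgebra k (Multiplicative (Multiset X)))}
    (hmonic : ∀ s ∈ S, MonicR ltC s) {f : MonoidAlgebra k (FreeMonoid X)}
    (hf : f ∈ bigS ltC S) {mf : FreeMonoid X} (hmf : IsLeadR (liftOrd ltC) f mf) :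
    f.coeff mf = 1 := by
  rcases hf with ⟨s, hsS, ms, hms, u, hu, rfl⟩ | ⟨i, j, hj, rfl⟩
  · obtain ⟨hld, hcoef⟩ := delt_lead (k := k) hC hms u
    have he : mf = dword (u * ms) :=
      lead_unique (lift_irrefl hC) (fun h1 h2 => lift_trans hC h1 h2) hmf hld
    rw [he, hcoef]
    obtain ⟨ms0, hms0, hc0⟩ := hmonic s hsS
    rw [lead_unique (ltC_irrefl hC) (fun h1 h2 => ltC_trans hC h1 h2) hms hms0]
    exact hc0
  · obtain ⟨hld, hco⟩ := comm_lead (k := k) hC hj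
    have he : mf = FreeMonoid.of i * FreeMonoid.of j :=
      lead_unique (lift_irrefl hC) (fun h1 h2 => lift_trans hC h1 h2) hmf hld
    rw [he]
    exact hco

lemma H1L (hC : MonOrd ltC) {f g : MonoidAlgebra k (FreeMonoid X)}
    {mf mg a₁ b₁ a₂ b₂ w : FreeMonoid X}
    (hmf : IsLeadR (liftOrd ltC) f mf) (hcf : f.coeff mf = 1)
    (hmg : IsLeadR (liftOrd ltC) g mg) (hcg : g.coeff mg = 1)
    (h1 : a₁ * mf * b₁ = w) (h2 : a₂ * mg * b₂ = w) :
    ∀ v ∈ (mono k a₁ * f * mono k b₁ - mono k a₂ * g * mono k b₂).coeff.support,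
      liftOrd ltC v w := by
  classical
  intro v hv
  have happ1 : (mono k a₁ * f * mono k b₁).coeff w = 1 := by
    rw [sandwich, ← h1, mdom_apply (fm_sandwich_inj a₁ b₁), hcf]
  have happ2 : (mono k a₂ * g * mono k b₂).coeff w = 1 := by
    rw [sandwich, ← h2, mdom_apply (fm_sandwich_inj a₂ b₂), hcg]
  have hvne : v ≠ w := by
    intro heq
    have : (mono k a₁ * f * mono k b₁ - mono k a₂ * g * mono k b₂).coeff w = 0 := by
      rw [MonoidAlgebra.coeff_sub, Finsupp.sub_apply, happ1, happ2, sub_self]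
    rw [heq] at hv
    exact (Finsupp.mem_support_iff.1 hv) this
  have hsub : (mono k a₁ * f * mono k b₁ - mono k a₂ * g * mono k b₂).coeff.support ⊆
      (mono k a₁ * f * mono k b₁).coeff.support ∪ (mono k a₂ * g * mono k b₂).coeff.support := by
    rw [MonoidAlgebra.coeff_sub]; exact Finsupp.support_sub
  rcases Finset.mem_union.1 (hsub hv) with hmem | hmem
  · rw [sandwich] at hmem
    obtain ⟨v₀, hv₀, rfl⟩ := Finset.mem_image.1 (mdom_support hmem)
    have hne₀ : v₀ ≠ mf := by
      intro heq; rw [heq] at hvne; exact hvne h1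
    rw [← h1]
    exact lift_compat hC a₁ b₁ (hmf.2 v₀ hv₀ hne₀)
  · rw [sandwich] at hmem
    obtain ⟨v₀, hv₀, rfl⟩ := Finset.mem_image.1 (mdom_support hmem)
    have hne₀ : v₀ ≠ mg := by
      intro heq; rw [heq] at hvne; exact hvne h2
    rw [← h2]
    exact lift_compat hC a₂ b₂ (hmg.2 v₀ hv₀ hne₀)

lemma Gam_bigS {S : Set (MonoidAlgebra k (Multiplicative (Multiset X)))}
    {f : MonoidAlgebra k (FreeMonoid X)} (hf : f ∈ bigS ltC S) :
    Gam k f ∈ Ideal.span S := by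
  rcases hf with ⟨s, hsS, ms, hms, u, hu, rfl⟩ | ⟨i, j, hj, rfl⟩
  · rw [Gam_delta]
    exact Ideal.mul_mem_left _ _ (Ideal.subset_span hsS)
  · rw [Gam_comm]
    exact Submodule.zero_mem _

end Aux11

/-- Eisenbud–Peeva–Sturmfels: if `S` is a minimal Gröbner basis in the
polynomial ring `k[X]` (with respect to a monomial order on `[X]`), then
`S' = {δ(u·s) : s ∈ S, u ∈ U(s̄)} ∪ {xᵢxⱼ - xⱼxᵢ : i > j}` is a Gröbner–Shirshov basis
in the free algebra `k⟨X⟩` with respect to the lifted order on `X*`. -/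
theorem stmt_14 {k X : Type*} [Field k] [LinearOrder X]
    (hwf : WellFounded ((· < ·) : X → X → Prop))
    (ltC : Multiplicative (Multiset X) → Multiplicative (Multiset X) → Prop)
    (hC : MonOrd ltC)
    (S : Set (MonoidAlgebra k (Multiplicative (Multiset X))))
    (hmonic : ∀ s ∈ S, MonicR ltC s)
    (hGB : ∀ f ∈ Ideal.span S, f ≠ 0 → ∀ mf : Multiplicative (Multiset X),
      IsLeadR ltC f mf → ∃ s ∈ S, ∃ ms : Multiplicative (Multiset X),
        IsLeadR ltC s ms ∧ ms ∣ mf)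
    (hmin : ∀ s ∈ S, ∀ t ∈ S, s ≠ t → ∀ ms mt : Multiplicative (Multiset X),
      IsLeadR ltC s ms → IsLeadR ltC t mt → ¬ ms ∣ mt) :
    FIsGSB (liftOrd ltC)
      ({p : MonoidAlgebra k (FreeMonoid X) | ∃ s ∈ S,
          ∃ ms : Multiplicative (Multiset X), IsLeadR ltC s ms ∧
          ∃ u ∈ UU ms, p = deltaMap (mono k u * s)} ∪ commSet k X) := by
  show FIsGSB (liftOrd ltC) (bigS ltC S)
  constructor
  · intro f hf
    rcases hf with ⟨s, hsS, ms, hms, u, hu, rfl⟩ | ⟨i, j, hj, rfl⟩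
    · obtain ⟨hld, hcoef⟩ := delt_lead (k := k) hC hms u
      refine ⟨dword (u * ms), hld, ?_⟩
      rw [hcoef]
      obtain ⟨ms0, hms0, hc0⟩ := hmonic s hsS
      rw [lead_unique (ltC_irrefl hC) (fun h1 h2 => ltC_trans hC h1 h2) hms hms0]
      exact hc0
    · obtain ⟨hld, hco⟩ := comm_lead (k := k) hC hj
      exact ⟨_, hld, hco⟩
  · intro f hf g hg mf mg hmf hmg
    have hcf := bigS_lead_coeff hC hmonic hf hmf
    have hcg := bigS_lead_coeff hC hmonic hg hmg
    constructor
    · intro a b heq _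
      apply trivSpan_to_trivMod
      have hform : f * mono k b - mono k a * g =
          mono k 1 * f * mono k b - mono k a * g * mono k 1 := by
        rw [mono_one, one_mul, mul_one]
      rw [hform]
      apply master hC hmonic hGB
      · exact H1L hC hmf hcf hmg hcg (by rw [one_mul]) (by rw [mul_one, ← heq])
      · have hGam : MonoidAlgebra.mapDomain gam
            (mono k 1 * f * mono k b - mono k a * g * mono k 1) =
            Gam k (mono k 1) * Gam k f * Gam k (mono k b) -
              Gam k (mono k a) * Gam k g * Gam k (mono k 1) := by
          rw [← Gam_apply, map_sub, map_mul, map_mul, map_mul, map_mul]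
        rw [hGam]
        apply Submodule.sub_mem
        · exact Ideal.mul_mem_right _ _ (Ideal.mul_mem_left _ _ (Gam_bigS hf))
        · exact Ideal.mul_mem_right _ _ (Ideal.mul_mem_left _ _ (Gam_bigS hg))
    · intro a b heq
      apply trivSpan_to_trivMod
      have hform : f - mono k a * g * mono k b =
          mono k 1 * f * mono k 1 - mono k a * g * mono k b := by
        rw [mono_one, one_mul, mul_one]
      rw [hform]
      apply master hC hmonic hGB
      · exact H1L hC hmf hcf hmg hcg (by rw [one_mul, mul_one]) (by rw [← heq])
      · have hGam : MonoidAlgebra.mapDomain gam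
            (mono k 1 * f * mono k 1 - mono k a * g * mono k b) =
            Gam k (mono k 1) * Gam k f * Gam k (mono k 1) -
              Gam k (mono k a) * Gam k g * Gam k (mono k b) := by
          rw [← Gam_apply, map_sub, map_mul, map_mul, map_mul, map_mul]
        rw [hGam]
        apply Submodule.sub_mem
        · exact Ideal.mul_mem_right _ _ (Ideal.mul_mem_left _ _ (Gam_bigS hf))
        · exact Ideal.mul_mem_right _ _ (Ideal.mul_mem_left _ _ (Gam_bigS hg))
end

section
/- Let s₁, s₂ be monic elements of k⟨X⟩ ⊗ k⟨Y⟩ whose leading words s̄₁, s̄₂ occur disjointly in a normal word w, i.e., w = a₁s̄₁b₁ = a₂s̄₂b₂ with s̄₁ and s̄₂ disjoint in both the X- and Y-components. Then a₁s₁b₁ - a₂s₂b₂ is a linear combination of elements c s d (s ∈ {s₁, s₂}, c, d ∈ N) with leading words strictly less than w, even in the 'crossed' case where the Y-part of s̄₂ precedes the Y-part of s̄₁ while the X-part of s̄₁ precedes that of s̄₂. -/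
section Aux

variable {k M : Type*} [Field k] [Monoid M] {lt : M → M → Prop}
  {S : Set (MonoidAlgebra k M)} {w : M}

lemma trivmod_zero : TrivModR lt S w (0 : MonoidAlgebra k M) :=
  ⟨0, Fin.elim0, Fin.elim0, Fin.elim0, Fin.elim0, fun i => i.elim0, by simp, fun i => i.elim0⟩

lemma trivmod_single (α : k) {aa bb : M} {s : MonoidAlgebra k M} (hs : s ∈ S)
    (hm : ∃ m, IsLeadR lt s m ∧ lt (aa * m * bb) w) :
    TrivModR lt S w (α • (mono k aa * s * mono k bb)) :=
  ⟨1, fun _ => α, fun _ => aa, fun _ => bb, fun _ => s, fun _ => hs, by simp, fun _ => hm⟩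

lemma trivmod_add {h₁ h₂ : MonoidAlgebra k M}
    (H₁ : TrivModR lt S w h₁) (H₂ : TrivModR lt S w h₂) :
    TrivModR lt S w (h₁ + h₂) := by
  obtain ⟨n₁, α₁, a₁, b₁, s₁, hS₁, he₁, hl₁⟩ := H₁
  obtain ⟨n₂, α₂, a₂, b₂, s₂, hS₂, he₂, hl₂⟩ := H₂
  refine ⟨n₁ + n₂, Fin.addCases α₁ α₂, Fin.addCases a₁ a₂, Fin.addCases b₁ b₂,
    Fin.addCases s₁ s₂, fun i => ?_, ?_, fun i => ?_⟩
  · refine Fin.addCases (fun j => ?_) (fun j => ?_) i <;>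
      simp only [Fin.addCases_left, Fin.addCases_right]
    exacts [hS₁ j, hS₂ j]
  · rw [Fin.sum_univ_add]
    simp only [Fin.addCases_left, Fin.addCases_right, ← he₁, ← he₂]
  · refine Fin.addCases (fun j => ?_) (fun j => ?_) i <;>
      simp only [Fin.addCases_left, Fin.addCases_right]
    exacts [hl₁ j, hl₂ j]

lemma trivmod_sum {ι : Type*} (t : Finset ι) (α : ι → k) (A B : ι → M)
    (s : ι → MonoidAlgebra k M) (hS : ∀ x ∈ t, s x ∈ S)
    (hl : ∀ x ∈ t, ∃ m, IsLeadR lt (s x) m ∧ lt (A x * m * B x) w) :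
    TrivModR lt S w (∑ x ∈ t, α x • (mono k (A x) * s x * mono k (B x))) := by
  classical
  induction t using Finset.induction_on with
  | empty => simpa using (trivmod_zero : TrivModR lt S w 0)
  | @insert x t hx ih =>
      rw [Finset.sum_insert hx]
      exact trivmod_add
        (trivmod_single _ (hS x (Finset.mem_insert_self x t)) (hl x (Finset.mem_insert_self x t)))
        (ih (fun y hy => hS y (Finset.mem_insert_of_mem hy))
            (fun y hy => hl y (Finset.mem_insert_of_mem hy)))

lemma monic_coeff (hasymm : ∀ {u v : M}, lt u v → lt v u → False)
    {s : MonoidAlgebra k M} {m : M} (hmonic : MonicR lt s) (hm : IsLeadR lt s m) :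
    s.coeff m = 1 := by
  obtain ⟨m', ⟨hm'1, hm'2⟩, hc⟩ := hmonic
  have : m' = m := by
    by_contra hne
    exact hasymm (hm.2 m' hm'1 hne) (hm'2 m hm.1 (Ne.symm hne))
  rwa [this] at hc

lemma mono_mul_expand (c d : M) (f : MonoidAlgebra k M) :
    mono k c * f * mono k d = ∑ n ∈ f.coeff.support, f.coeff n • mono k (c * n * d) := by
  conv_lhs => rw [← MonoidAlgebra.sum_coeff_single f]
  rw [Finsupp.sum, Finset.mul_sum, Finset.sum_mul]
  refine Finset.sum_congr rfl fun n _ => ?_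
  simp [mono, MonoidAlgebra.of_apply, MonoidAlgebra.single_mul_single,
    MonoidAlgebra.smul_single', mul_assoc]

end Aux

section AuxNW

variable {X Y : Type*} {ltX : FreeMonoid X → FreeMonoid X → Prop}
  {ltY : FreeMonoid Y → FreeMonoid Y → Prop}

lemma lexNW_mul (hX : MonOrd ltX) (hY : MonOrd ltY) {u v : NW X Y} (w₁ w₂ : NW X Y)
    (h : lexNW ltX ltY u v) : lexNW ltX ltY (w₁ * u * w₂) (w₁ * v * w₂) := by
  rcases h with h | ⟨h1, h2⟩
  · exact Or.inl (hX.2.2 _ _ _ _ h)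
  · refine Or.inr ⟨?_, hY.2.2 _ _ _ _ h2⟩
    show w₁.1 * u.1 * w₂.1 = w₁.1 * v.1 * w₂.1
    rw [h1]

lemma lexNW_asymm (hX : MonOrd ltX) (hY : MonOrd ltY) {u v : NW X Y}
    (h : lexNW ltX ltY u v) (h' : lexNW ltX ltY v u) : False := by
  haveI := hX.1
  haveI := hY.1
  rcases h with h | ⟨h1, h2⟩ <;> rcases h' with h' | ⟨h1', h2'⟩
  · exact asymm h h'
  · rw [h1'] at h; exact irrefl _ h
  · rw [h1] at h'; exact irrefl _ h'
  · exact asymm h2 h2'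

end AuxNW

/-- disjoint case, Case 4: if the leading words of monic `s₁, s₂` occur
disjointly in `w = a₁s̄₁b₁ = a₂s̄₂b₂` (in both the `X`- and `Y`-components, including
the crossed case where the `Y`-part of `s̄₂` precedes that of `s̄₁` while the `X`-part
of `s̄₁` precedes that of `s̄₂`), then `a₁s₁b₁ - a₂s₂b₂` is a linear combination of
elements `c·s·d` with `s ∈ {s₁, s₂}` and leading words strictly less than `w`. -/
theorem stmt_18 {k X Y : Type*} [Field k]
    (ltX : FreeMonoid X → FreeMonoid X → Prop) (ltY : FreeMonoid Y → FreeMonoid Y → Prop)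
    (hX : MonOrd ltX) (hY : MonOrd ltY)
    (s₁ s₂ : MonoidAlgebra k (NW X Y))
    (h₁ : MonicR (lexNW ltX ltY) s₁) (h₂ : MonicR (lexNW ltX ltY) s₂)
    (m₁ m₂ : NW X Y)
    (hm₁ : IsLeadR (lexNW ltX ltY) s₁ m₁) (hm₂ : IsLeadR (lexNW ltX ltY) s₂ m₂)
    (a₁ b₁ a₂ b₂ w : NW X Y)
    (hw₁ : w = a₁ * m₁ * b₁) (hw₂ : w = a₂ * m₂ * b₂)
    (hdisj :
      (∃ (a : FreeMonoid X) (c : FreeMonoid Y),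
        a₂.1 = a₁.1 * m₁.1 * a ∧ b₁.1 = a * m₂.1 * b₂.1 ∧
        a₂.2 = a₁.2 * m₁.2 * c ∧ b₁.2 = c * m₂.2 * b₂.2) ∨
      (∃ (a : FreeMonoid X) (c : FreeMonoid Y),
        a₂.1 = a₁.1 * m₁.1 * a ∧ b₁.1 = a * m₂.1 * b₂.1 ∧
        a₁.2 = a₂.2 * m₂.2 * c ∧ b₂.2 = c * m₁.2 * b₁.2)) :
    TrivModR (lexNW ltX ltY) {s₁, s₂} w
      (mono k a₁ * s₁ * mono k b₁ - mono k a₂ * s₂ * mono k b₂) := by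
  classical
  obtain ⟨c₁, d₁, c₂, d₂, hc₁, hd₁, hc₂, hd₂, hsym⟩ :
      ∃ c₁ d₁ c₂ d₂ : NW X Y → NW X Y,
        c₁ m₂ = a₁ ∧ d₁ m₂ = b₁ ∧ c₂ m₁ = a₂ ∧ d₂ m₁ = b₂ ∧
        ∀ n n' : NW X Y, c₁ n * n' * d₁ n = c₂ n' * n * d₂ n' := by
    rcases hdisj with ⟨a, c, h1, h2, h3, h4⟩ | ⟨a, c, h1, h2, h3, h4⟩
    · refine ⟨fun _ => a₁, fun n => (a, c) * n * b₂, fun n' => a₁ * n' * (a, c), fun _ => b₂,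
        rfl, ?_, ?_, rfl, fun n n' => by simp [mul_assoc]⟩
      · exact Prod.ext (by simpa [Prod.fst_mul] using h2.symm)
          (by simpa [Prod.snd_mul] using h4.symm)
      · exact Prod.ext (by simpa [Prod.fst_mul] using h1.symm)
          (by simpa [Prod.snd_mul] using h3.symm)
    · refine ⟨fun n => (a₁.1, a₂.2 * n.2 * c), fun n => (a * n.1 * b₂.1, b₁.2),
        fun n' => (a₁.1 * n'.1 * a, a₂.2), fun n' => (b₂.1, c * n'.2 * b₁.2),
        ?_, ?_, ?_, ?_, fun n n' => ?_⟩
      · exact Prod.ext rfl h3.symm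
      · exact Prod.ext h2.symm rfl
      · exact Prod.ext h1.symm rfl
      · exact Prod.ext rfl h4.symm
      · refine Prod.ext ?_ ?_ <;> simp [Prod.fst_mul, Prod.snd_mul, mul_assoc]
  have hasym : ∀ {u v : NW X Y}, lexNW ltX ltY u v → lexNW ltX ltY v u → False :=
    fun h h' => lexNW_asymm hX hY h h'
  have hs1m : s₁.coeff m₁ = 1 := monic_coeff hasym h₁ hm₁
  have hs2m : s₂.coeff m₂ = 1 := monic_coeff hasym h₂ hm₂
  set D : MonoidAlgebra k (NW X Y) :=
    ∑ n ∈ s₂.coeff.support, s₂.coeff n • (mono k (c₁ n) * s₁ * mono k (d₁ n)) with hDdef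
  have hD : D = ∑ n' ∈ s₁.coeff.support, s₁.coeff n' • (mono k (c₂ n') * s₂ * mono k (d₂ n')) := by
    rw [hDdef]
    simp only [mono_mul_expand, Finset.smul_sum]
    rw [Finset.sum_comm]
    refine Finset.sum_congr rfl fun n' _ => Finset.sum_congr rfl fun n _ => ?_
    rw [hsym n n', smul_comm]
  have e1 : ∑ n ∈ s₂.coeff.support.erase m₂, s₂.coeff n • (mono k (c₁ n) * s₁ * mono k (d₁ n))
      = D - mono k a₁ * s₁ * mono k b₁ := by
    rw [hDdef, Finset.sum_erase_eq_sub hm₂.1, hs2m, hc₁, hd₁, one_smul]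
  have e2 : ∑ n' ∈ s₁.coeff.support.erase m₁, s₁.coeff n' • (mono k (c₂ n') * s₂ * mono k (d₂ n'))
      = D - mono k a₂ * s₂ * mono k b₂ := by
    rw [hD, Finset.sum_erase_eq_sub hm₁.1, hs1m, hc₂, hd₂, one_smul]
  have key : mono k a₁ * s₁ * mono k b₁ - mono k a₂ * s₂ * mono k b₂
      = (∑ n ∈ s₂.coeff.support.erase m₂, (-(s₂.coeff n)) • (mono k (c₁ n) * s₁ * mono k (d₁ n)))
        + ∑ n' ∈ s₁.coeff.support.erase m₁, s₁.coeff n' • (mono k (c₂ n') * s₂ * mono k (d₂ n')) := by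
    simp only [neg_smul]
    rw [Finset.sum_neg_distrib, e1, e2]
    abel
  rw [key]
  refine trivmod_add ?_ ?_
  · refine trivmod_sum _ (fun n => -(s₂.coeff n)) c₁ d₁ (fun _ => s₁)
      (fun n _ => Set.mem_insert _ _) fun n hn => ?_
    refine ⟨m₁, hm₁, ?_⟩
    rw [Finset.mem_erase] at hn
    have hlt : lexNW ltX ltY n m₂ := hm₂.2 n hn.2 hn.1
    have heq : c₁ n * m₁ * d₁ n = a₂ * n * b₂ := by rw [hsym n m₁, hc₂, hd₂]
    rw [heq, hw₂]
    exact lexNW_mul hX hY a₂ b₂ hlt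
  · refine trivmod_sum _ (fun n' => s₁.coeff n') c₂ d₂ (fun _ => s₂)
      (fun n _ => Set.mem_insert_of_mem _ rfl) fun n' hn => ?_
    refine ⟨m₂, hm₂, ?_⟩
    rw [Finset.mem_erase] at hn
    have hlt : lexNW ltX ltY n' m₁ := hm₁.2 n' hn.2 hn.1
    have heq : c₂ n' * m₂ * d₂ n' = a₁ * n' * b₁ := by rw [← hsym m₂ n', hc₁, hd₁]
    rw [heq, hw₁]
    exact lexNW_mul hX hY a₁ b₁ hlt
end
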